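/- arXiv:math/0407440 — 5 statements merged into one kernel-verified Lean document; each statement's English description precedes it below -/
import Mathlib

section
/- For every regular uncountable cardinal κ, the cofinality of the unequality number U_κ is greater than κ. -/
open Cardinal Set

namespace PaperFormal

noncomputable section

/-- The least (small) cardinality of a family `F : Set X` satisfying `P`. -/
def leastCard {X : Type 1} (P : Set X → Prop) : Cardinal.{0} :=
  sInf {c : Cardinal.{0} | ∃ F : Set X, P F ∧ Cardinal.lift.{1} c = #F}

/-- The collection of (codings of) functions from `κ` to `κ`. -/
def funOn (κ : Cardinal.{0}) : Set (Ordinal.{0} → Ordinal.{0}) :=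
  {f | ∀ α < κ.ord, f α < κ.ord}

/-- The unequality number `U_κ`. -/
def uneq (κ : Cardinal.{0}) : Cardinal.{0} :=
  leastCard fun F : Set (Ordinal.{0} → Ordinal.{0}) => F ⊆ funOn κ ∧
    ∀ g ∈ funOn κ, ∃ f ∈ F, {α | α < κ.ord ∧ f α = g α} = ∅

/-- The dominating number `d_κ`. -/
def domNum (κ : Cardinal.{0}) : Cardinal.{0} :=
  leastCard fun F : Set (Ordinal.{0} → Ordinal.{0}) => F ⊆ funOn κ ∧
    ∀ g ∈ funOn κ, ∃ f ∈ F, ∀ α < κ.ord, g α < f α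

/-- The number `d̄_κ`. -/
def domBar (κ : Cardinal.{0}) : Cardinal.{0} :=
  leastCard fun X : Set (Ordinal.{0} → Ordinal.{0}) => X ⊆ funOn κ ∧
    ∀ g ∈ funOn κ, ∃ x ⊆ X, x.Nonempty ∧ #x < Cardinal.lift.{1} κ ∧
      ∀ α < κ.ord, g α < sSup {o | ∃ f ∈ x, f α = o}

/-- The generalized Cantor space `^ρ2`, with points coded as subsets of `Iio ρ.ord`. -/
def cantor (ρ : Cardinal.{0}) : Set (Set Ordinal.{0}) := {x | x ⊆ Iio ρ.ord}

/-- A forcing condition: a pair `(a, t)` with `t ⊆ a ⊆ Iio ρ.ord` and `|a| < ν`. -/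
def IsCond (ν ρ : Cardinal.{0}) (a t : Set Ordinal.{0}) : Prop :=
  a ⊆ Iio ρ.ord ∧ t ⊆ a ∧ #a < Cardinal.lift.{1} ν

/-- The basic open set determined by a condition. -/
def basicOpen (ρ : Cardinal.{0}) (a t : Set Ordinal.{0}) : Set (Set Ordinal.{0}) :=
  {x | x ⊆ Iio ρ.ord ∧ x ∩ a = t}

/-- Dense open subsets of `^ρ2` (for the `<ν`-support topology). -/
def DenseOpen (ν ρ : Cardinal.{0}) (D : Set (Set Ordinal.{0})) : Prop :=
  D ⊆ cantor ρ ∧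
  (∀ x ∈ D, ∃ a t, IsCond ν ρ a t ∧ x ∈ basicOpen ρ a t ∧ basicOpen ρ a t ⊆ D) ∧
  (∀ a t, IsCond ν ρ a t → (basicOpen ρ a t ∩ D).Nonempty)

/-- Members of `M_{ν,ρ}`. -/
def Meager (ν ρ : Cardinal.{0}) (W : Set (Set Ordinal.{0})) : Prop :=
  W ⊆ cantor ρ ∧ ∃ X : Set (Set (Set Ordinal.{0})), X.Nonempty ∧
    #X ≤ Cardinal.lift.{1} ν ∧ (∀ D ∈ X, DenseOpen ν ρ D) ∧ W ∩ ⋂₀ X = ∅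

/-- The covering number for category `cov(M_{ν,ρ})`. -/
def covM (ν ρ : Cardinal.{0}) : Cardinal.{0} :=
  leastCard fun Y : Set (Set (Set Ordinal.{0})) =>
    (∀ W ∈ Y, Meager ν ρ W) ∧ ⋃₀ Y = cantor ρ

/-- A (`κ`-complete) ideal on `κ`. -/
structure IdealK (κ : Cardinal.{0}) where
  mem : Set (Set Ordinal.{0})
  subset_iio : ∀ A ∈ mem, A ⊆ Iio κ.ord
  singleton_mem : ∀ α < κ.ord, {α} ∈ mem
  subset_mem : ∀ A ∈ mem, ∀ B ⊆ A, B ∈ mem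
  sUnion_mem : ∀ X : Set (Set Ordinal.{0}), X ⊆ mem → #X < Cardinal.lift.{1} κ → ⋃₀ X ∈ mem
  ne_top : Iio κ.ord ∉ mem

/-- `J⁺`, the sets (⊆ κ) not in the ideal. -/
def IdealK.plus {κ : Cardinal.{0}} (J : IdealK κ) : Set (Set Ordinal.{0}) :=
  {A | A ⊆ Iio κ.ord ∧ A ∉ J.mem}

/-- `cof(J)`. -/
def IdealK.cof {κ : Cardinal.{0}} (J : IdealK κ) : Cardinal.{0} :=
  leastCard fun X : Set (Set Ordinal.{0}) =>
    X ⊆ J.mem ∧ ∀ A, A ∈ J.mem ↔ ∃ B ∈ X, A ⊆ B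

/-- `cof̄(J)`. -/
def IdealK.cofBar {κ : Cardinal.{0}} (J : IdealK κ) : Cardinal.{0} :=
  leastCard fun X : Set (Set Ordinal.{0}) =>
    X ⊆ J.mem ∧ ∀ A ∈ J.mem, ∃ x ⊆ X, #x < Cardinal.lift.{1} κ ∧ A ⊆ ⋃₀ x

/-- `non_κ(P)`. -/
def nonK (κ : Cardinal.{0}) (P : IdealK κ → Prop) : Cardinal.{0} :=
  sInf {c | ∃ J : IdealK κ, J.cof = c ∧ ¬ P J}

/-- `non̄_κ(P)`. -/
def nonBarK (κ : Cardinal.{0}) (P : IdealK κ → Prop) : Cardinal.{0} :=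
  sInf {c | ∃ J : IdealK κ, J.cofBar = c ∧ ¬ P J}

/-- Weak `P`-point. -/
def WeakPPoint {κ : Cardinal.{0}} (J : IdealK κ) : Prop :=
  ∀ A ∈ J.plus, ∀ f : Ordinal.{0} → Ordinal.{0},
    (∀ α ∈ A, f α < κ.ord) → (∀ β, {α ∈ A | f α = β} ∈ J.mem) →
    ∃ B ∈ J.plus, B ⊆ A ∧ ∀ β, #{α ∈ B | f α = β} < Cardinal.lift.{1} κ

/-- Weak `Q`-point. -/
def WeakQPoint {κ : Cardinal.{0}} (J : IdealK κ) : Prop :=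
  ∀ A ∈ J.plus, ∀ g ∈ funOn κ,
    ∃ B ∈ J.plus, B ⊆ A ∧ ∀ α ∈ B, ∀ β ∈ B, α < β → g α < β

/-- Weakly selective ideal. -/
def WeaklySelective {κ : Cardinal.{0}} (J : IdealK κ) : Prop :=
  WeakPPoint J ∧ WeakQPoint J

/-- Weak semi-`Q`-point. -/
def WeakSemiQPoint {κ : Cardinal.{0}} (J : IdealK κ) : Prop :=
  ∀ A ∈ J.plus, ∀ f : Ordinal.{0} → Ordinal.{0},
    (∀ α ∈ A, f α < κ.ord) →
    (∀ β, #{α ∈ A | f α = β} < Cardinal.lift.{1} κ) →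
    ∃ C ∈ J.plus, C ⊆ A ∧ ∀ β < κ.ord, #{α ∈ C | f α = β} ≤ Cardinal.lift.{1} β.card

/-- `P_κ(λ)`, coded as the small subsets of `Iio λ.ord`. -/
def smallSet (κ lam : Cardinal.{0}) : Set (Set Ordinal.{0}) :=
  {a | a ⊆ Iio lam.ord ∧ #a < Cardinal.lift.{1} κ}

/-- The ideal `I_{κ,λ}` of noncofinal subsets of `P_κ(λ)`. -/
def Ikl (κ lam : Cardinal.{0}) : Set (Set (Set Ordinal.{0})) :=
  {A | A ⊆ smallSet κ lam ∧ ∃ a ∈ smallSet κ lam, ∀ b ∈ A, ¬ a ⊆ b}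

/-- A (`κ`-complete fine) ideal on `P_κ(λ)`. -/
structure IdealP (κ lam : Cardinal.{0}) where
  mem : Set (Set (Set Ordinal.{0}))
  subset_pk : ∀ A ∈ mem, A ⊆ smallSet κ lam
  fine : Ikl κ lam ⊆ mem
  subset_mem : ∀ A ∈ mem, ∀ B ⊆ A, B ∈ mem
  sUnion_mem : ∀ X : Set (Set (Set Ordinal.{0})), X ⊆ mem →
    #X < Cardinal.lift.{1} κ → ⋃₀ X ∈ mem
  ne_top : smallSet κ lam ∉ mem

/-- `H⁺` computed from the underlying collection `Hm` of an ideal on `P_κ(λ)`. -/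
def plusOf (κ lam : Cardinal.{0}) (Hm : Set (Set (Set Ordinal.{0}))) :
    Set (Set (Set Ordinal.{0})) :=
  {A | A ⊆ smallSet κ lam ∧ A ∉ Hm}

/-- `H⁺`. -/
def IdealP.plus {κ lam : Cardinal.{0}} (H : IdealP κ lam) : Set (Set (Set Ordinal.{0})) :=
  plusOf κ lam H.mem

/-- `cof(H)`. -/
def IdealP.cof {κ lam : Cardinal.{0}} (H : IdealP κ lam) : Cardinal.{0} :=
  leastCard fun X : Set (Set (Set Ordinal.{0})) =>
    X ⊆ H.mem ∧ ∀ A, A ∈ H.mem ↔ ∃ B ∈ X, A ⊆ B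

/-- `cof̄(H)`. -/
def IdealP.cofBar {κ lam : Cardinal.{0}} (H : IdealP κ lam) : Cardinal.{0} :=
  leastCard fun X : Set (Set (Set Ordinal.{0})) =>
    X ⊆ H.mem ∧ ∀ A ∈ H.mem, ∃ x ⊆ X, #x < Cardinal.lift.{1} κ ∧ A ⊆ ⋃₀ x

/-- `d^κ_{κ,λ}`. -/
def domP (κ lam : Cardinal.{0}) : Cardinal.{0} :=
  leastCard fun F : Set (Ordinal.{0} → Set Ordinal.{0}) =>
    (∀ f ∈ F, ∀ α < κ.ord, f α ∈ smallSet κ lam) ∧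
    ∀ g : Ordinal.{0} → Set Ordinal.{0}, (∀ α < κ.ord, g α ∈ smallSet κ lam) →
      ∃ f ∈ F, ∀ α < κ.ord, g α ⊆ f α

/-- A maximal almost disjoint family of size `≥ κ` for `H` (a member of `M_H^{≥κ}`). -/
def IsMad {κ lam : Cardinal.{0}} (H : IdealP κ lam) (Q : Set (Set (Set Ordinal.{0}))) : Prop :=
  Q ⊆ H.plus ∧ Cardinal.lift.{1} κ ≤ #Q ∧
  (∀ A ∈ Q, ∀ B ∈ Q, A ≠ B → A ∩ B ∈ H.mem) ∧
  ∀ C ∈ H.plus, ∃ A ∈ Q, A ∩ C ∈ H.plus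

/-- The (small) cardinal `c` with `lift c = c'`, used to pull `λ^{<κ} = |P_κ(λ)|` down. -/
def downCard (c : Cardinal.{1}) : Cardinal.{0} :=
  sInf {d : Cardinal.{0} | Cardinal.lift.{1} d = c}

open Classical in
/-- The number `a_H`. -/
def aNum {κ lam : Cardinal.{0}} (H : IdealP κ lam) : Cardinal.{0} :=
  if ∃ Q, IsMad H Q then sInf {c | ∃ Q, IsMad H Q ∧ Cardinal.lift.{1} c = #Q}
  else 2 ^ Order.succ (downCard #(smallSet κ lam))

/-- Weak `π`-point. -/
def WeakPiPoint {κ lam : Cardinal.{0}} (H : IdealP κ lam) : Prop :=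
  ∀ f : Ordinal.{0} → Set (Set Ordinal.{0}), (∀ α < κ.ord, f α ∈ H.mem) →
    ∀ A ∈ H.plus, ∃ B ∈ H.plus, B ⊆ A ∧ ∀ α < κ.ord, B ∩ f α ∈ Ikl κ lam

/-- `∪(a ∩ κ)`. -/
def supK (κ : Cardinal.{0}) (a : Set Ordinal.{0}) : Ordinal.{0} :=
  sSup (a ∩ Iio κ.ord)

/-- The relation `a ≺ b`. -/
def prec (κ : Cardinal.{0}) (a b : Set Ordinal.{0}) : Prop :=
  a ⊆ b ∧ supK κ a < supK κ b

/-- `[A]_κ²`. -/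
def pairsK (κ : Cardinal.{0}) (A : Set (Set Ordinal.{0})) : Set (Ordinal.{0} × Set Ordinal.{0}) :=
  {p | ∃ a ∈ A, ∃ b ∈ A, supK κ a < supK κ b ∧ p = (supK κ a, b)}

/-- `[A]_≺²`. -/
def pairsPrec (κ : Cardinal.{0}) (A : Set (Set Ordinal.{0})) :
    Set (Ordinal.{0} × Set Ordinal.{0}) :=
  {p | ∃ a ∈ A, ∃ b ∈ A, prec κ a b ∧ p = (supK κ a, b)}

/-- `[A]_{κ,κ}²`. -/
def pairsKK (κ : Cardinal.{0}) (A : Set (Set Ordinal.{0})) : Set (Ordinal.{0} × Ordinal.{0}) :=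
  {p | ∃ a ∈ A, ∃ b ∈ A, supK κ a < supK κ b ∧ p = (supK κ a, supK κ b)}

/-- `S` is a set of ordinals of order type `α`. -/
def OrdType (S : Set Ordinal.{0}) (α : Ordinal.{0}) : Prop :=
  ∃ e : Ordinal.{0} → Ordinal.{0},
    (∀ i < α, ∀ j < α, i < j → e i < e j) ∧ e '' Iio α = S

/-- `(B, ≺)` has order type `α`. -/
def OrdTypePrec (κ : Cardinal.{0}) (B : Set (Set Ordinal.{0})) (α : Ordinal.{0}) : Prop :=
  ∃ e : Ordinal.{0} → Set Ordinal.{0},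
    (∀ i < α, ∀ j < α, i < j → prec κ (e i) (e j)) ∧ e '' Iio α = B

/-- The partition relation `κ → (κ, θ)²`. -/
def ArrowKTheta (κ : Cardinal.{0}) (θ : Ordinal.{0}) : Prop :=
  ∀ f : Ordinal.{0} → Ordinal.{0} → Fin 2, ∃ A ⊆ Iio κ.ord,
    (OrdType A κ.ord ∧ ∀ α ∈ A, ∀ β ∈ A, α < β → f α β = 0) ∨
    (OrdType A θ ∧ ∀ α ∈ A, ∀ β ∈ A, α < β → f α β = 1)

/-- `κ` is weakly compact. -/
def WeaklyCompact (κ : Cardinal.{0}) : Prop :=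
  ∀ f : Ordinal.{0} → Ordinal.{0} → Fin 2, ∃ A ⊆ Iio κ.ord,
    OrdType A κ.ord ∧ ∃ i, ∀ α ∈ A, ∀ β ∈ A, α < β → f α β = i

/-- The partition relation `J⁺ → (J⁺, α)²` for an ideal on `κ`. -/
def ArrowJ {κ : Cardinal.{0}} (J : IdealK κ) (α : Ordinal.{0}) : Prop :=
  ∀ A ∈ J.plus, ∀ f : Ordinal.{0} → Ordinal.{0} → Fin 2,
    ∃ B ⊆ A, (B ∈ J.plus ∧ ∀ β ∈ B, ∀ γ ∈ B, β < γ → f β γ = 0) ∨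
             (OrdType B α ∧ ∀ β ∈ B, ∀ γ ∈ B, β < γ → f β γ = 1)

/-- The square bracket relation `J⁺ → [J⁺]_ρ²` for an ideal on `κ`. -/
def SqBrJ {κ : Cardinal.{0}} (J : IdealK κ) (ρ : Cardinal.{0}) : Prop :=
  ∀ A ∈ J.plus, ∀ f : Ordinal.{0} → Ordinal.{0} → Ordinal.{0},
    (∀ β ∈ A, ∀ γ ∈ A, β < γ → f β γ < ρ.ord) →
    ∃ B ∈ J.plus, B ⊆ A ∧ {ξ | ∃ β ∈ B, ∃ γ ∈ B, β < γ ∧ f β γ = ξ} ≠ Iio ρ.ord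

/-- `H⁺ →_κ (H⁺, α)²`. -/
def ArrowP (κ lam : Cardinal.{0}) (Hm : Set (Set (Set Ordinal.{0}))) (α : Ordinal.{0}) : Prop :=
  ∀ F : Ordinal.{0} → Set Ordinal.{0} → Fin 2, ∀ A ∈ plusOf κ lam Hm,
    ∃ B ⊆ A, (B ∈ plusOf κ lam Hm ∧ ∀ p ∈ pairsK κ B, F p.1 p.2 = 0) ∨
             (OrdTypePrec κ B α ∧ ∀ p ∈ pairsK κ B, F p.1 p.2 = 1)

/-- `H⁺ →_{κ,κ} (H⁺, α)²`. -/
def ArrowPKK (κ lam : Cardinal.{0}) (Hm : Set (Set (Set Ordinal.{0}))) (α : Ordinal.{0}) : Prop :=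
  ∀ F : Ordinal.{0} → Ordinal.{0} → Fin 2, ∀ A ∈ plusOf κ lam Hm,
    ∃ B ⊆ A, (B ∈ plusOf κ lam Hm ∧ ∀ p ∈ pairsKK κ B, F p.1 p.2 = 0) ∨
             (OrdTypePrec κ B α ∧ ∀ p ∈ pairsKK κ B, F p.1 p.2 = 1)

/-- `H⁺ →_{κ,κ} (H⁺; α)²`. -/
def ArrowPKKsemi (κ lam : Cardinal.{0}) (Hm : Set (Set (Set Ordinal.{0}))) (α : Ordinal.{0}) :
    Prop :=
  ∀ F : Ordinal.{0} → Ordinal.{0} → Fin 2, ∀ A ∈ plusOf κ lam Hm,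
    ∃ B ⊆ A, (B ∈ plusOf κ lam Hm ∧ ∀ p ∈ pairsKK κ B, F p.1 p.2 = 0) ∨
             (OrdType {o | ∃ a ∈ B, supK κ a = o} α ∧ ∀ p ∈ pairsKK κ B, F p.1 p.2 = 1)

/-- `H⁺ →_κ (H⁺)²`. -/
def ArrowPConst (κ lam : Cardinal.{0}) (Hm : Set (Set (Set Ordinal.{0}))) : Prop :=
  ∀ F : Ordinal.{0} → Set Ordinal.{0} → Fin 2, ∀ A ∈ plusOf κ lam Hm,
    ∃ B ∈ plusOf κ lam Hm, B ⊆ A ∧ ∃ i, ∀ p ∈ pairsK κ B, F p.1 p.2 = i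

/-- `H⁺ →_{κ,κ} [H⁺]_ρ²`. -/
def SqBrPKK (κ lam : Cardinal.{0}) (Hm : Set (Set (Set Ordinal.{0}))) (ρ : Cardinal.{0}) : Prop :=
  ∀ F : Ordinal.{0} → Ordinal.{0} → Ordinal.{0},
    (∀ α β : Ordinal.{0}, α < β → β < κ.ord → F α β < ρ.ord) →
    ∀ A ∈ plusOf κ lam Hm, ∃ B ∈ plusOf κ lam Hm, B ⊆ A ∧
      {ξ | ∃ p ∈ pairsKK κ B, F p.1 p.2 = ξ} ≠ Iio ρ.ord

/-- The class `K(κ,λ)`. -/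
def Kset (κ lam : Cardinal.{0}) : Set Cardinal.{0} :=
  {σ | lam ≤ σ ∧ ∃ T ⊆ smallSet κ lam, Cardinal.lift.{1} σ = #T ∧
    ∀ a ∈ smallSet κ lam, #{t ∈ T | t ⊆ a} < Cardinal.lift.{1} κ}

end

end PaperFormal

namespace PaperFormal

/-- Auxiliary: `G` is "meetable": a single `g ∈ funOn κ` meets every member of `G`. -/
private def Meets (κ : Cardinal.{0}) (G : Set (Ordinal.{0} → Ordinal.{0})) : Prop :=
  ∃ g ∈ funOn κ, ∀ f ∈ G, ∃ α, α < κ.ord ∧ f α = g α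

private lemma ord_pos_of_pos {κ : Cardinal.{0}} (hκ : 0 < κ) : (0 : Ordinal.{0}) < κ.ord := by
  simpa using Cardinal.ord_lt_ord.2 hκ

private lemma zero_mem_funOn {κ : Cardinal.{0}} (hκ : 0 < κ) :
    (fun _ => (0 : Ordinal.{0})) ∈ funOn κ :=
  fun _ _ => ord_pos_of_pos hκ

private lemma meets_of_subsingleton {κ : Cardinal.{0}} (hκ : 0 < κ)
    {G : Set (Ordinal.{0} → Ordinal.{0})} (hG : G ⊆ funOn κ) (hs : G.Subsingleton) :
    Meets κ G := by
  classical
  have h0 : (0 : Ordinal.{0}) < κ.ord := ord_pos_of_pos hκ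
  rcases G.eq_empty_or_nonempty with rfl | ⟨f, hf⟩
  · exact ⟨fun _ => 0, zero_mem_funOn hκ, by simp⟩
  · refine ⟨fun α => if h : α < κ.ord then f α else 0, ?_, ?_⟩
    · intro α hα
      simp only [dif_pos hα]
      exact hG hf α hα
    · intro f' hf'
      have hff : f' = f := hs hf' hf
      subst hff
      exact ⟨0, h0, by simp only [dif_pos h0]⟩

/-- The diagonalization lemma: if `F` is covered by `κ` many pieces, each of which
is "small" in the sense that families of its cardinality are meetable, then `F` is
meetable. -/
private lemma meets_diag {κ : Cardinal.{0}} (hκ : ℵ₀ ≤ κ)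
    {F : Set (Ordinal.{0} → Ordinal.{0})}
    {Fi : Ordinal.{0} → Set (Ordinal.{0} → Ordinal.{0})}
    (hsub : ∀ i < κ.ord, Fi i ⊆ funOn κ)
    (hcov : ∀ f ∈ F, ∃ i < κ.ord, f ∈ Fi i)
    (hmeet : ∀ i < κ.ord, ∀ G ⊆ funOn κ, #G ≤ #(Fi i) → Meets κ G) :
    Meets κ F := by
  classical
  have hκ0 : 0 < κ := lt_of_lt_of_le aleph0_pos hκ
  have hmkIio : #(Iio κ.ord) = Cardinal.lift.{1} κ := by
    rw [Ordinal.mk_Iio_ordinal, Cardinal.card_ord]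
  have hcard : #(Iio κ.ord) = #(Iio κ.ord × Iio κ.ord) := by
    rw [Cardinal.mk_prod, hmkIio, ← Cardinal.lift_mul, ← Cardinal.lift_mul,
      Cardinal.mul_eq_self hκ, Cardinal.lift_lift]
  obtain ⟨p⟩ := Cardinal.eq.1 hcard
  -- transported families
  set T : Iio κ.ord → (Ordinal.{0} → Ordinal.{0}) → (Ordinal.{0} → Ordinal.{0}) :=
    fun i f => fun β => if h : β < κ.ord then f ((p.symm (i, ⟨β, h⟩) : Iio κ.ord) : Ordinal)
      else 0 with hT
  have hGsub : ∀ i : Iio κ.ord, (T i) '' (Fi i) ⊆ funOn κ := by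
    rintro i t ⟨f, hf, rfl⟩ β hβ
    simp only [hT, dif_pos hβ]
    exact hsub i i.2 hf _ (p.symm (i, ⟨β, hβ⟩)).2
  have key : ∀ i : Iio κ.ord, Meets κ ((T i) '' (Fi i)) :=
    fun i => hmeet i i.2 _ (hGsub i) Cardinal.mk_image_le
  choose h hh1 hh2 using key
  refine ⟨fun α => if hα : α < κ.ord then h (p ⟨α, hα⟩).1 ((p ⟨α, hα⟩).2 : Ordinal) else 0,
    ?_, ?_⟩
  · intro α hα
    simp only [dif_pos hα]
    exact hh1 (p ⟨α, hα⟩).1 _ (p ⟨α, hα⟩).2.2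
  · intro f hfF
    obtain ⟨i, hi, hfi⟩ := hcov f hfF
    obtain ⟨β, hβ, heq⟩ := hh2 ⟨i, hi⟩ (T ⟨i, hi⟩ f) ⟨f, hfi, rfl⟩
    set a : ↥(Iio κ.ord) := p.symm (⟨i, hi⟩, ⟨β, hβ⟩) with ha
    have hpa : p a = (⟨i, hi⟩, ⟨β, hβ⟩) := p.apply_symm_apply _
    refine ⟨(a : Ordinal), a.2, ?_⟩
    have hfa : f (a : Ordinal) = h ⟨i, hi⟩ β := by
      have h' := heq
      simp only [hT, dif_pos hβ] at h'
      exact h'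
    have ha2 : (a : Ordinal) < κ.ord := a.2
    show f (a : Ordinal) = (if hα : (a : Ordinal) < κ.ord then
      h (p ⟨(a : Ordinal), hα⟩).1 ((p ⟨(a : Ordinal), hα⟩).2 : Ordinal) else 0)
    rw [dif_pos ha2]
    show f (a : Ordinal) = h (p a).1 ((p a).2 : Ordinal)
    rw [hpa]
    exact hfa

end PaperFormal

namespace PaperFormal

/-- For every regular uncountable cardinal `κ`,
the cofinality of the unequality number `U_κ` is greater than `κ`. -/
theorem cof_uneq_gt (κ : Cardinal.{0}) (hreg : κ.IsRegular) (huc : ℵ₀ < κ) :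
    κ < (uneq κ).ord.cof := by
  classical
  have hκinf : ℵ₀ ≤ κ := huc.le
  have hκ0 : 0 < κ := aleph0_pos.trans huc
  have hlim : Order.IsSuccLimit κ.ord := Cardinal.isSuccLimit_ord hκinf
  have hmkIio : ∀ o : Ordinal.{0}, #(Iio o) = Cardinal.lift.{1} o.card := by
    intro o; rw [Ordinal.mk_Iio_ordinal]
  set S : Set Cardinal.{0} :=
    {c | ∃ F : Set (Ordinal.{0} → Ordinal.{0}), (F ⊆ funOn κ ∧
      ∀ g ∈ funOn κ, ∃ f ∈ F, {α | α < κ.ord ∧ f α = g α} = ∅) ∧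
      Cardinal.lift.{1} c = #F} with hSdef
  have hUdef : uneq κ = sInf S := rfl
  -- S is nonempty
  have hSne : S.Nonempty := by
    set F : Set (Ordinal.{0} → Ordinal.{0}) :=
      {f | (∀ α < κ.ord, f α < κ.ord) ∧ ∀ α, ¬ α < κ.ord → f α = 0} with hFdef
    have e : ↥F ≃ (↥(Iio κ.ord) → ↥(Iio κ.ord)) :=
      { toFun := fun f a => ⟨f.1 a, f.2.1 a a.2⟩
        invFun := fun F0 => ⟨fun α => if h : α < κ.ord then (F0 ⟨α, h⟩ : Ordinal) else 0,
          fun α hα => by simpa only [dif_pos hα, Set.mem_Iio] using (F0 ⟨α, hα⟩).2,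
          fun α hα => dif_neg hα⟩
        left_inv := by
          rintro ⟨f, hf1, hf2⟩
          apply Subtype.ext
          funext α
          by_cases h : α < κ.ord
          · simp only [dif_pos h]
          · simp only [dif_neg h]; exact (hf2 α h).symm
        right_inv := by
          intro F0
          funext a
          apply Subtype.ext
          have ha2 : (a : Ordinal) < κ.ord := a.2
          show (if h : (a : Ordinal) < κ.ord then (F0 ⟨a, h⟩ : Ordinal) else 0) = _
          rw [dif_pos ha2] }
    refine ⟨κ ^ κ, F, ⟨fun f hf => hf.1, ?_⟩, ?_⟩
    · intro g hg
      refine ⟨fun α => if h : α < κ.ord then g α + 1 else 0, ⟨?_, fun α hα => dif_neg hα⟩, ?_⟩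
      · intro α hα
        simp only [dif_pos hα]
        rw [Ordinal.add_one_eq_succ]
        exact hlim.succ_lt (hg α hα)
      · rw [Set.eq_empty_iff_forall_notMem]
        rintro α ⟨hα, hEq⟩
        simp only [dif_pos hα] at hEq
        exact (Order.lt_succ (g α)).ne' (by rwa [Ordinal.add_one_eq_succ] at hEq)
    · rw [Cardinal.mk_congr e, ← Cardinal.power_def, hmkIio, Cardinal.card_ord,
        ← Cardinal.lift_power]
  have hU : uneq κ ∈ S := hUdef ▸ csInf_mem hSne
  obtain ⟨F₀, hPF₀, hcardF₀⟩ := hU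
  -- every member of S is greater than κ
  have main : ∀ c ∈ S, κ < c := by
    rintro c ⟨F, ⟨hFsub, hFpred⟩, hc⟩
    by_contra hle
    push_neg at hle
    have hFle : #↥F ≤ #↥(Iio κ.ord) := by
      rw [← hc, hmkIio, Cardinal.card_ord]
      exact Cardinal.lift_le.2 hle
    obtain ⟨n⟩ := (Cardinal.le_def _ _).1 hFle
    set Fi : Ordinal.{0} → Set (Ordinal.{0} → Ordinal.{0}) :=
      fun i => {f | ∃ hf : f ∈ F, ((n ⟨f, hf⟩ : ↥(Iio κ.ord)) : Ordinal) = i} with hFidef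
    have hsub : ∀ i < κ.ord, Fi i ⊆ funOn κ := by
      rintro i _ f ⟨hf, -⟩; exact hFsub hf
    have hss : ∀ i, (Fi i).Subsingleton := by
      rintro i f ⟨hfF, hfi⟩ f' ⟨hf'F, hfi'⟩
      have h1 : n ⟨f, hfF⟩ = n ⟨f', hf'F⟩ := Subtype.ext (hfi.trans hfi'.symm)
      exact congrArg Subtype.val (n.injective h1)
    have hcov : ∀ f ∈ F, ∃ i < κ.ord, f ∈ Fi i := fun f hf =>
      ⟨(n ⟨f, hf⟩ : ↥(Iio κ.ord)), (n ⟨f, hf⟩).2, hf, rfl⟩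
    have hmeet : ∀ i < κ.ord, ∀ G ⊆ funOn κ, #G ≤ #(Fi i) → Meets κ G := by
      intro i _ G hG hcard
      have h1 : #↥G ≤ 1 := hcard.trans (hss i).cardinalMk_le_one
      exact meets_of_subsingleton hκ0 hG (Cardinal.mk_le_one_iff_set_subsingleton.1 h1)
    obtain ⟨g, hg, hmeets⟩ := meets_diag hκinf hsub hcov hmeet
    obtain ⟨f, hfF, hfe⟩ := hFpred g hg
    obtain ⟨α, hα, he⟩ := hmeets f hfF
    have hmem : α ∈ {α | α < κ.ord ∧ f α = g α} := ⟨hα, he⟩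
    rw [hfe] at hmem
    exact hmem
  have hκU : κ < uneq κ := main _ (hUdef ▸ csInf_mem hSne)
  have hUinf : ℵ₀ ≤ uneq κ := hκinf.trans hκU.le
  have hUlim : Order.IsSuccLimit (uneq κ).ord := Cardinal.isSuccLimit_ord hUinf
  by_contra hcof
  push_neg at hcof
  obtain ⟨ι, fct, hlsub, hι⟩ := Ordinal.exists_lsub_cof (uneq κ).ord
  have hικ : #ι ≤ κ := hι.le.trans hcof
  have hιle : Cardinal.lift.{1} #ι ≤ #↥(Iio κ.ord) := by
    rw [hmkIio, Cardinal.card_ord]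
    exact Cardinal.lift_le.2 hικ
  have hιle' : #(ULift.{1} ι) ≤ #↥(Iio κ.ord) := by
    rw [Cardinal.mk_uLift]; exact hιle
  obtain ⟨m⟩ := (Cardinal.le_def _ _).1 hιle'
  -- m : ULift ι ↪ ↥(Iio κ.ord)
  have hmk : #↥F₀ = #↥(Iio (uneq κ).ord) := by
    rw [hmkIio, Cardinal.card_ord, ← hcardF₀]
  obtain ⟨E⟩ := Cardinal.eq.1 hmk
  set Fi : Ordinal.{0} → Set (Ordinal.{0} → Ordinal.{0}) := fun i =>
    {f | ∃ hf : f ∈ F₀, ∃ x : ι, ((m ⟨x⟩ : ↥(Iio κ.ord)) : Ordinal) = i ∧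
      ((E ⟨f, hf⟩ : ↥(Iio (uneq κ).ord)) : Ordinal) ≤ fct x} with hFidef
  have hsub : ∀ i < κ.ord, Fi i ⊆ funOn κ := by
    rintro i _ f ⟨hf, -⟩; exact hPF₀.1 hf
  have hcov : ∀ f ∈ F₀, ∃ i < κ.ord, f ∈ Fi i := by
    intro f hf
    have hE : ((E ⟨f, hf⟩ : ↥(Iio (uneq κ).ord)) : Ordinal) < Ordinal.lsub fct := by
      rw [hlsub]; exact (E ⟨f, hf⟩).2
    obtain ⟨x, hx⟩ := Ordinal.lt_lsub_iff.1 hE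
    exact ⟨((m ⟨x⟩ : ↥(Iio κ.ord)) : Ordinal), (m ⟨x⟩).2, hf, x, rfl, hx⟩
  have hmeet : ∀ i < κ.ord, ∀ G ⊆ funOn κ, #G ≤ #(Fi i) → Meets κ G := by
    intro i _ G hG hcard
    by_cases hx : ∃ x : ι, ((m ⟨x⟩ : ↥(Iio κ.ord)) : Ordinal) = i
    · obtain ⟨x, hxi⟩ := hx
      have hfx : fct x < (uneq κ).ord := by rw [← hlsub]; exact Ordinal.lt_lsub fct x
      have hfx1 : fct x + 1 < (uneq κ).ord := by
        rw [Ordinal.add_one_eq_succ]; exact hUlim.succ_lt hfx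
      have hbound : ∀ f ∈ Fi i, ∃ hf0 : f ∈ F₀,
          ((E ⟨f, hf0⟩ : ↥(Iio (uneq κ).ord)) : Ordinal) ≤ fct x := by
        rintro f ⟨hf0, x', hx', hle'⟩
        have hxx : x' = x := by
          have h1 : m ⟨x'⟩ = m ⟨x⟩ := Subtype.ext (hx'.trans hxi.symm)
          exact congrArg ULift.down (m.injective h1)
        subst hxx
        exact ⟨hf0, hle'⟩
      choose hf0 hle' using hbound
      have hinj : Function.Injective (fun f : ↥(Fi i) =>
          (⟨((E ⟨f.1, hf0 f.1 f.2⟩ : ↥(Iio (uneq κ).ord)) : Ordinal), by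
            rw [Ordinal.add_one_eq_succ]
            exact (hle' f.1 f.2).trans_lt (Order.lt_succ _)⟩ : ↥(Iio (fct x + 1)))) := by
        intro f f' hff
        have hval := congrArg (fun z : ↥(Iio (fct x + 1)) => (z : Ordinal.{0})) hff
        have h1 : (E ⟨f.1, hf0 f.1 f.2⟩ : ↥(Iio (uneq κ).ord))
            = E ⟨f'.1, hf0 f'.1 f'.2⟩ := Subtype.ext hval
        have h2 : (⟨f.1, hf0 f.1 f.2⟩ : ↥F₀) = ⟨f'.1, hf0 f'.1 f'.2⟩ := E.injective h1
        have h3 : f.1 = f'.1 := congrArg (fun z : ↥F₀ => z.1) h2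
        exact Subtype.ext h3
      have h1 : #(Fi i) ≤ Cardinal.lift.{1} ((fct x + 1).card) := by
        calc #(Fi i) ≤ #↥(Iio (fct x + 1)) := Cardinal.mk_le_of_injective hinj
          _ = _ := hmkIio _
      have hcx : (fct x + 1).card < uneq κ := Cardinal.lt_ord.1 hfx1
      obtain ⟨d, hd⟩ := Cardinal.mem_range_lift_of_le (hcard.trans h1)
      have hdlt : d < uneq κ := by
        refine lt_of_le_of_lt ?_ hcx
        have hdd : Cardinal.lift.{1} d ≤ Cardinal.lift.{1} ((fct x + 1).card) := by
          rw [hd]; exact hcard.trans h1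
        exact Cardinal.lift_le.1 hdd
      by_contra hnm
      have hdS : d ∈ S := by
        refine ⟨G, ⟨hG, ?_⟩, hd⟩
        intro g hg
        by_contra h2
        push_neg at h2
        apply hnm
        refine ⟨g, hg, ?_⟩
        intro f hf
        obtain ⟨α, hα⟩ := h2 f hf
        exact ⟨α, hα.1, hα.2⟩
      exact absurd (hUdef ▸ csInf_le' hdS) (not_le.2 hdlt)
    · have hFie : Fi i = ∅ := by
        rw [Set.eq_empty_iff_forall_notMem]
        rintro f ⟨hf0, x, hxi, -⟩
        exact hx ⟨x, hxi⟩
      have h1 : #↥G ≤ 1 := by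
        rw [hFie] at hcard
        simpa using hcard.trans (by simp : #(↥(∅ : Set (Ordinal.{0} → Ordinal.{0}))) ≤ 1)
      exact meets_of_subsingleton hκ0 hG (Cardinal.mk_le_one_iff_set_subsingleton.1 h1)
  obtain ⟨g, hg, hmeets⟩ := meets_diag hκinf hsub hcov hmeet
  obtain ⟨f, hfF, hfe⟩ := hPF₀.2 g hg
  obtain ⟨α, hα, he⟩ := hmeets f hfF
  have hmem : α ∈ {α | α < κ.ord ∧ f α = g α} := ⟨hα, he⟩
  rw [hfe] at hmem
  exact hmem

end PaperFormal
end

section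
/- Suppose κ is the successor of a regular infinite cardinal ν. Then U_κ ≥ min(d_κ, cov(M_{ν,κ})). -/
open Cardinal Set

namespace PaperFormal


namespace UneqAux

open Cardinal Set

variable {ν κ : Cardinal.{0}}

lemma kreg (hν : ν.IsRegular) (hκ : κ = Order.succ ν) : κ.IsRegular := by
  subst hκ; exact Cardinal.isRegular_succ hν.aleph0_le

lemma Klim (hν : ν.IsRegular) (hκ : κ = Order.succ ν) : Order.IsSuccLimit (κ.ord) :=
  Cardinal.isSuccLimit_ord (kreg hν hκ).aleph0_le

lemma add_lt_K (hν : ν.IsRegular) (hκ : κ = Order.succ ν) {α β : Ordinal.{0}}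
    (h1 : α < κ.ord) (h2 : β < κ.ord) : α + β < κ.ord := by
  rw [Cardinal.lt_ord, Ordinal.card_add]
  exact Cardinal.add_lt_of_lt (kreg hν hκ).aleph0_le
    (Cardinal.lt_ord.mp h1) (Cardinal.lt_ord.mp h2)

lemma blk_lt_K (hν : ν.IsRegular) (hκ : κ = Order.succ ν) {β η : Ordinal.{0}}
    (h1 : β < κ.ord) (h2 : η < ν.ord) : ν.ord * β + η < κ.ord := by
  have hνκ : ν < κ := hκ ▸ Order.lt_succ ν
  rw [Cardinal.lt_ord, Ordinal.card_add, Ordinal.card_mul, Cardinal.card_ord]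
  have hβ : β.card ≤ ν := by subst hκ; exact Order.lt_succ_iff.mp (Cardinal.lt_ord.mp h1)
  have hη : η.card ≤ ν := by
    exact (Cardinal.lt_ord.mp h2).le
  calc ν * β.card + η.card ≤ ν * ν + ν := add_le_add (mul_le_mul_right hβ ν) hη
    _ = ν := by rw [Cardinal.mul_eq_self hν.aleph0_le, Cardinal.add_eq_self hν.aleph0_le]
    _ < κ := hνκ

lemma bdd_of_small (hν : ν.IsRegular) (hκ : κ = Order.succ ν) {a : Set Ordinal.{0}}
    (ha : a ⊆ Iio κ.ord) (hsm : #a < Cardinal.lift.{1} ν) :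
    ∃ β0 < κ.ord, ∀ γ ∈ a, γ < β0 := by
  obtain ⟨ca, hca⟩ := Cardinal.mem_range_lift_of_le hsm.le
  have hcalt : ca < ν := by rwa [← hca, Cardinal.lift_lt] at hsm
  have h1 : #a = #(Iio ca.ord) := by
    rw [Ordinal.mk_Iio_ordinal, Cardinal.card_ord, ← hca]
  obtain ⟨e⟩ := Cardinal.eq.mp h1
  refine ⟨Ordinal.blsub ca.ord (fun i hi => (e.symm ⟨i, hi⟩ : Ordinal)), ?_, ?_⟩
  · apply Ordinal.blsub_lt_ord
    · rw [Cardinal.card_ord, (kreg hν hκ).cof_eq]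
      exact hcalt.trans (hκ ▸ Order.lt_succ ν)
    · intro i hi; exact ha (e.symm ⟨i, hi⟩).2
  · intro γ hγ
    have : ((e.symm (e ⟨γ, hγ⟩) : a) : Ordinal) < _ :=
      Ordinal.lt_blsub (fun i hi => (e.symm ⟨i, hi⟩ : Ordinal)) (e ⟨γ, hγ⟩).1 (e ⟨γ, hγ⟩).2
    simpa using this

lemma exists_decoder (hν : ν.IsRegular) (hκ : κ = Order.succ ν) {o : Ordinal.{0}}
    (ho : o < κ.ord) : ∃ s : Ordinal.{0} → Ordinal.{0},
    (∀ η, s η < κ.ord) ∧ ∀ γ < o, ∃ η < ν.ord, s η = γ := by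
  have hcard : #(Iio o) ≤ #(Iio ν.ord) := by
    rw [Ordinal.mk_Iio_ordinal, Ordinal.mk_Iio_ordinal, Cardinal.card_ord, Cardinal.lift_le]
    subst hκ; exact Order.lt_succ_iff.mp (Cardinal.lt_ord.mp ho)
  obtain ⟨j⟩ := (Cardinal.le_def _ _).mp hcard
  classical
  refine ⟨fun η => if h : ∃ γ : Iio o, ((j γ : Iio ν.ord) : Ordinal) = η
      then (h.choose : Ordinal) else 0, ?_, ?_⟩
  · intro η
    by_cases h : ∃ γ : Iio o, ((j γ : Iio ν.ord) : Ordinal) = η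
    · dsimp only; rw [dif_pos h]; exact h.choose.2.trans ho
    · dsimp only; rw [dif_neg h]; exact (Klim hν hκ).pos
  · intro γ hγ
    have h : ∃ γ' : Iio o, ((j γ' : Iio ν.ord) : Ordinal) = (j ⟨γ, hγ⟩ : Iio ν.ord) :=
      ⟨⟨γ, hγ⟩, rfl⟩
    refine ⟨(j ⟨γ, hγ⟩ : Iio ν.ord), (j ⟨γ, hγ⟩).2, ?_⟩
    dsimp only
    rw [dif_pos h]
    have : h.choose = ⟨γ, hγ⟩ := j.injective (Subtype.coe_injective h.choose_spec)
    rw [this]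

/-- No family of size `≤ κ` is everywhere dominating. -/
lemma not_small_dominating (hν : ν.IsRegular) (hκ : κ = Order.succ ν)
    {F : Set (Ordinal.{0} → Ordinal.{0})} (hsub : F ⊆ funOn κ)
    (hdom : ∀ g ∈ funOn κ, ∃ f ∈ F, ∀ α < κ.ord, g α < f α) :
    ¬ (#F ≤ Cardinal.lift.{1} κ) := by
  classical
  intro hle
  have hKlim := Klim hν hκ
  have hFne : F.Nonempty := by
    obtain ⟨f, hf, -⟩ := hdom (fun _ => 0) (fun α hα => hKlim.pos)
    exact ⟨f, hf⟩
  have : Nonempty F := hFne.to_subtype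
  have hle' : #F ≤ #(Iio κ.ord) := by
    rwa [Ordinal.mk_Iio_ordinal, Cardinal.card_ord]
  obtain ⟨emb⟩ := (Cardinal.le_def _ _).mp hle'
  set es : (Iio κ.ord) → F := Function.invFun emb with hes
  have hessurj : Function.Surjective es := Function.invFun_surjective emb.injective
  set eo : Ordinal.{0} → (Ordinal.{0} → Ordinal.{0}) :=
    fun i => if h : i < κ.ord then (es ⟨i, h⟩ : Ordinal → Ordinal) else fun _ => 0 with heo
  set G : Ordinal.{0} → Ordinal.{0} := fun α => Ordinal.blsub (α + 1) (fun i _ => eo i α)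
    with hG
  have hGfun : G ∈ funOn κ := by
    intro α hα
    apply Ordinal.blsub_lt_ord
    · rw [(kreg hν hκ).cof_eq]
      exact Cardinal.lt_ord.mp (hKlim.succ_lt hα)
    · intro i hi
      have hiK : i < κ.ord := lt_of_le_of_lt (Order.lt_succ_iff.mp
        (by rwa [← Ordinal.add_one_eq_succ])) hα
      show (if h : i < κ.ord then (es ⟨i, h⟩ : Ordinal → Ordinal) else fun _ => 0) α < κ.ord
      rw [dif_pos hiK]
      exact hsub (es ⟨i, hiK⟩).2 α hα
  obtain ⟨f, hf, hdf⟩ := hdom G hGfun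
  obtain ⟨i, hi⟩ := hessurj ⟨f, hf⟩
  have hIK : (i : Ordinal) < κ.ord := i.2
  have h1 : eo i i < G i := Ordinal.lt_blsub (fun j _ => eo j (i : Ordinal)) (i : Ordinal)
    (by rw [Ordinal.add_one_eq_succ]; exact Order.lt_succ _)
  have h2 : eo (i : Ordinal) (i : Ordinal) = f (i : Ordinal) := by
    show (if h : (i:Ordinal) < κ.ord then (es ⟨(i:Ordinal), h⟩ : Ordinal → Ordinal)
      else fun _ => 0) (i:Ordinal) = f (i:Ordinal)
    rw [dif_pos hIK]
    rw [show (⟨(i : Ordinal), hIK⟩ : Iio κ.ord) = i from Subtype.ext rfl, hi]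
  rw [h2] at h1
  exact absurd (hdf i hIK) (not_lt.mpr h1.le)

lemma uneqSet_nonempty (hν : ν.IsRegular) (hκ : κ = Order.succ ν) :
    {c : Cardinal.{0} | ∃ F : Set (Ordinal.{0} → Ordinal.{0}),
      (F ⊆ funOn κ ∧ ∀ g ∈ funOn κ, ∃ f ∈ F, {α | α < κ.ord ∧ f α = g α} = ∅) ∧
      Cardinal.lift.{1} c = #F}.Nonempty := by
  classical
  have hKlim := Klim hν hκ
  set Fa : Set (Ordinal.{0} → Ordinal.{0}) :=
    {f | ∀ α : Ordinal.{0}, (α < κ.ord → f α < κ.ord) ∧ (¬ α < κ.ord → f α = 0)} with hFa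
  have hmk : #Fa = Cardinal.lift.{1} (κ ^ κ) := by
    have e : Fa ≃ ((Iio κ.ord) → (Iio κ.ord)) := by
      refine ⟨fun f => fun α => ⟨f.1 α, (f.2 α).1 α.2⟩,
        fun g => ⟨fun α => if h : α < κ.ord then g ⟨α, h⟩ else 0, fun α => ⟨?_, ?_⟩⟩, ?_, ?_⟩
      · intro h; beta_reduce; rw [dif_pos h]; exact (g ⟨α, h⟩).2
      · intro h; beta_reduce; rw [dif_neg h]
      · intro f
        apply Subtype.ext
        funext α
        by_cases h : α < κ.ord
        · simp only [dif_pos h]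
        · simp only [dif_neg h]
          exact ((f.2 α).2 h).symm
      · intro g
        funext α
        apply Subtype.ext
        show (if h : (α:Ordinal) < κ.ord then ((g ⟨(α:Ordinal), h⟩ : Iio κ.ord) : Ordinal) else 0)
          = (g α : Ordinal)
        rw [dif_pos (show (α:Ordinal) < κ.ord from α.2)]
    rw [Cardinal.mk_congr e, ← Cardinal.power_def, Ordinal.mk_Iio_ordinal, Cardinal.card_ord,
      ← Cardinal.lift_power]
  refine ⟨κ ^ κ, Fa, ⟨fun f hf α hα => (hf α).1 hα, ?_⟩, hmk.symm⟩
  intro g hg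
  refine ⟨fun α => if α < κ.ord then g α + 1 else 0, fun α => ⟨?_, ?_⟩, ?_⟩
  · intro h; beta_reduce; rw [if_pos h, Ordinal.add_one_eq_succ]
    exact hKlim.succ_lt (hg α h)
  · intro h; beta_reduce; rw [if_neg h]
  · ext α
    simp only [mem_setOf_eq, mem_empty_iff_false, iff_false, not_and]
    intro hα
    rw [if_pos hα, Ordinal.add_one_eq_succ]
    exact (Order.lt_succ (g α)).ne'

/-- Existence of a function catching each `f ∈ F` cofinally, when `#F` is below `d_κ`. -/
lemma exists_catcher (hν : ν.IsRegular) (hκ : κ = Order.succ ν)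
    {F : Set (Ordinal.{0} → Ordinal.{0})} (hsub : F ⊆ funOn κ)
    {c : Cardinal.{0}} (hc : Cardinal.lift.{1} c = #F) (hcd : ¬ domNum κ ≤ c) :
    ∃ G' : Ordinal.{0} → Ordinal.{0}, (∀ β < κ.ord, G' β < κ.ord) ∧
      ∀ f ∈ F, ∀ δ < κ.ord, ∃ β, δ ≤ β ∧ β < κ.ord ∧ f β < G' β := by
  classical
  have hKlim := Klim hν hκ
  set sh : (Ordinal.{0} → Ordinal.{0}) → Ordinal.{0} → (Ordinal.{0} → Ordinal.{0}) :=
    fun f δ α => if α < κ.ord then f (δ + α) else 0 with hsh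
  set Fs : Set (Ordinal.{0} → Ordinal.{0}) := {h | ∃ f ∈ F, ∃ δ < κ.ord, h = sh f δ} with hFs
  have hFssub : Fs ⊆ funOn κ := by
    rintro h ⟨f, hf, δ, hδ, rfl⟩
    intro α hα
    show (if α < κ.ord then f (δ + α) else 0) < κ.ord
    rw [if_pos hα]
    exact hsub hf _ (add_lt_K hν hκ hδ hα)
  have hFsle : #Fs ≤ Cardinal.lift.{1} (c * κ) := by
    have hle : #Fs ≤ #(F × (Iio κ.ord)) := by
      refine Cardinal.mk_le_of_surjective (f := fun p : F × (Iio κ.ord) =>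
        (⟨sh p.1 p.2, ⟨p.1, p.1.2, p.2, p.2.2, rfl⟩⟩ : Fs)) ?_
      rintro ⟨h, f, hf, δ, hδ, rfl⟩
      exact ⟨(⟨f, hf⟩, ⟨δ, hδ⟩), rfl⟩
    rwa [Cardinal.mk_prod, Cardinal.lift_id, Cardinal.lift_id, ← hc,
      Ordinal.mk_Iio_ordinal, Cardinal.card_ord, ← Cardinal.lift_mul] at hle
  have hnotdom : ¬ (∀ g ∈ funOn κ, ∃ h ∈ Fs, ∀ α < κ.ord, g α < h α) := by
    intro hdom
    obtain ⟨c₃, hc₃⟩ := Cardinal.mem_range_lift_of_le hFsle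
    have hd3 : domNum κ ≤ c₃ := csInf_le' ⟨Fs, ⟨hFssub, hdom⟩, hc₃⟩
    by_cases h3 : c₃ ≤ κ
    · refine not_small_dominating hν hκ hFssub hdom ?_
      rw [← hc₃]
      exact Cardinal.lift_le.mpr h3
    · have h4 : c₃ ≤ c * κ := by
        rw [← Cardinal.lift_le.{1}, hc₃]; exact hFsle
      have h5 : c * κ ≤ max c κ := le_trans (Cardinal.mul_le_max c κ)
        (max_le le_rfl ((kreg hν hκ).aleph0_le.trans (le_max_right c κ)))
      have h6 : c₃ ≤ c := by
        rcases max_cases c κ with ⟨hm, _⟩ | ⟨hm, _⟩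
        · exact h4.trans (h5.trans_eq hm)
        · exact absurd ((h4.trans h5).trans_eq hm) h3
      exact hcd (hd3.trans h6)
  push_neg at hnotdom
  obtain ⟨g, hg, hgprop⟩ := hnotdom
  refine ⟨fun β => Ordinal.blsub (β + 1) (fun i _ => g i), ?_, ?_⟩
  · intro β hβ
    apply Ordinal.blsub_lt_ord
    · rw [(kreg hν hκ).cof_eq]
      exact Cardinal.lt_ord.mp (hKlim.succ_lt hβ)
    · intro i hi
      exact hg i (lt_of_le_of_lt (Order.lt_succ_iff.mp
        (by rwa [← Ordinal.add_one_eq_succ])) hβ)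
  · intro f hf δ hδ
    obtain ⟨α, hα, hle⟩ := hgprop (sh f δ) ⟨f, hf, δ, hδ, rfl⟩
    have hsha : sh f δ α = f (δ + α) := if_pos hα
    rw [hsha] at hle
    refine ⟨δ + α, le_self_add, add_lt_K hν hκ hδ hα, ?_⟩
    have hαlt : α < (δ + α) + 1 := by
      rw [Ordinal.add_one_eq_succ]
      exact (le_add_self (a := α) (b := δ)).trans_lt (Order.lt_succ _)
    exact lt_of_le_of_lt hle (Ordinal.lt_blsub (fun i _ => g i) α hαlt)

/-- The covering family of meager sets, given a catcher `G'`. -/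
lemma exists_cover (hν : ν.IsRegular) (hκ : κ = Order.succ ν)
    {F : Set (Ordinal.{0} → Ordinal.{0})}
    (hFprop : ∀ g ∈ funOn κ, ∃ f ∈ F, {α | α < κ.ord ∧ f α = g α} = ∅)
    {G' : Ordinal.{0} → Ordinal.{0}} (hG' : ∀ β < κ.ord, G' β < κ.ord)
    (hcatch : ∀ f ∈ F, ∀ δ < κ.ord, ∃ β, δ ≤ β ∧ β < κ.ord ∧ f β < G' β) :
    ∃ Y : Set (Set (Set Ordinal.{0})),
      ((∀ W ∈ Y, Meager ν κ W) ∧ ⋃₀ Y = PaperFormal.cantor κ) ∧ #Y ≤ #F := by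
  classical
  have hKlim := Klim hν hκ
  have hN0 : (0 : Ordinal) < ν.ord := by
    rw [Cardinal.lt_ord, Ordinal.card_zero]
    exact aleph0_pos.trans_le hν.aleph0_le
  have hsf : ∀ β, β < κ.ord → ∃ s : Ordinal.{0} → Ordinal.{0},
      (∀ η, s η < κ.ord) ∧ ∀ γ < G' β, ∃ η < ν.ord, s η = γ :=
    fun β hβ => exists_decoder hν hκ (hG' β hβ)
  choose! sfun hsf1 hsf2 using hsf
  set gx : Set Ordinal.{0} → Ordinal.{0} → Ordinal.{0} := fun x α =>
    if h : α < κ.ord ∧ {η | η < ν.ord ∧ ν.ord * α + η ∈ x}.Nonempty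
    then sfun α (sInf {η | η < ν.ord ∧ ν.ord * α + η ∈ x}) else 0 with hgx
  have hgxfun : ∀ x, gx x ∈ funOn κ := by
    intro x α hα
    show (if h : α < κ.ord ∧ {η | η < ν.ord ∧ ν.ord * α + η ∈ x}.Nonempty
      then sfun α (sInf {η | η < ν.ord ∧ ν.ord * α + η ∈ x}) else 0) < κ.ord
    by_cases h : α < κ.ord ∧ {η | η < ν.ord ∧ ν.ord * α + η ∈ x}.Nonempty
    · rw [dif_pos h]; exact hsf1 α hα _
    · rw [dif_neg h]; exact hKlim.pos
  have gx_eq : ∀ x β η, β < κ.ord → η < ν.ord → ν.ord * β + η ∈ x →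
      (∀ η' < η, ν.ord * β + η' ∉ x) → gx x β = sfun β η := by
    intro x β η hβ hη hmem hmin
    have hne : {η' | η' < ν.ord ∧ ν.ord * β + η' ∈ x}.Nonempty := ⟨η, hη, hmem⟩
    have hinf : sInf {η' | η' < ν.ord ∧ ν.ord * β + η' ∈ x} = η := by
      have h1 := csInf_mem hne
      have h2 : sInf {η' | η' < ν.ord ∧ ν.ord * β + η' ∈ x} ≤ η := csInf_le' ⟨hη, hmem⟩
      rcases lt_or_eq_of_le h2 with h | h
      · exact absurd h1.2 (hmin _ h)
      · exact h
    show (if h : β < κ.ord ∧ {η' | η' < ν.ord ∧ ν.ord * β + η' ∈ x}.Nonempty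
      then sfun β (sInf {η' | η' < ν.ord ∧ ν.ord * β + η' ∈ x}) else 0) = sfun β η
    rw [dif_pos ⟨hβ, hne⟩, hinf]
  set W : (Ordinal.{0} → Ordinal.{0}) → Set (Set Ordinal.{0}) := fun f =>
    {x | x ⊆ Iio κ.ord ∧ ∀ α < κ.ord, f α ≠ gx x α} with hW
  set D : (Ordinal.{0} → Ordinal.{0}) → Set (Set Ordinal.{0}) := fun f =>
    {x | x ⊆ Iio κ.ord ∧ ∃ β < κ.ord, ∃ η < ν.ord,
      (ν.ord * β + η ∈ x ∧ (∀ η' < η, ν.ord * β + η' ∉ x) ∧ sfun β η = f β)} with hD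
  have hbeyond : ∀ {a : Set Ordinal.{0}} {β0 β η : Ordinal.{0}}, (∀ γ ∈ a, γ < β0) →
      β0 ≤ β → ∀ γ ∈ a, γ < ν.ord * β + η := by
    intro a β0 β η hbd hle γ hγ
    have h1 : β ≤ ν.ord * β := by
      calc β = 1 * β := (one_mul β).symm
        _ ≤ ν.ord * β := mul_le_mul_left (Order.one_le_iff_pos.mpr hN0) β
    exact lt_of_lt_of_le (hbd γ hγ) (hle.trans (h1.trans le_self_add))
  have hDopen : ∀ f ∈ F, DenseOpen ν κ (D f) := by
    intro f hf
    refine ⟨fun x hx => hx.1, ?_, ?_⟩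
    · rintro x ⟨hxsub, β, hβ, η, hη, hmem, hmin, hcode⟩
      refine ⟨(fun γ => ν.ord * β + γ) '' (Iio (Order.succ η)), {ν.ord * β + η},
        ⟨?_, ?_, ?_⟩, ⟨hxsub, ?_⟩, ?_⟩
      · rintro _ ⟨γ, hγ, rfl⟩
        have hγη : γ ≤ η := Order.lt_succ_iff.mp hγ
        exact blk_lt_K hν hκ hβ (hγη.trans_lt hη)
      · rintro _ rfl
        exact ⟨η, Order.lt_succ η, rfl⟩
      · refine lt_of_le_of_lt Cardinal.mk_image_le ?_
        rw [Ordinal.mk_Iio_ordinal, Cardinal.lift_lt, Ordinal.card_succ]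
        exact Cardinal.add_lt_of_lt hν.aleph0_le (Cardinal.lt_ord.mp hη)
          (one_lt_aleph0.trans_le hν.aleph0_le)
      · ext z
        simp only [mem_inter_iff, mem_image, mem_singleton_iff]
        constructor
        · rintro ⟨hzx, γ, hγ, rfl⟩
          have hγη : γ ≤ η := Order.lt_succ_iff.mp hγ
          rcases lt_or_eq_of_le hγη with h | h
          · exact absurd hzx (hmin γ h)
          · rw [h]
        · rintro rfl
          exact ⟨hmem, η, Order.lt_succ η, rfl⟩
      · rintro y ⟨hysub, hyinter⟩
        refine ⟨hysub, β, hβ, η, hη, ?_, ?_, hcode⟩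
        · have : ν.ord * β + η ∈ y ∩ ((fun γ => ν.ord * β + γ) '' (Iio (Order.succ η))) := by
            rw [hyinter]; rfl
          exact this.1
        · intro η' hη' hmem'
          have hmem'' : ν.ord * β + η' ∈ y ∩ ((fun γ => ν.ord * β + γ) '' (Iio (Order.succ η))) :=
            ⟨hmem', η', hη'.trans (Order.lt_succ η), rfl⟩
          rw [hyinter, mem_singleton_iff] at hmem''
          exact absurd (add_left_cancel_iff.mp hmem'') hη'.ne
    · rintro a t ⟨ha1, hta, hsm⟩
      obtain ⟨β0, hβ0K, hbd⟩ := bdd_of_small hν hκ ha1 hsm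
      obtain ⟨β, hβ0le, hβK, hfβ⟩ := hcatch f hf β0 hβ0K
      obtain ⟨η, hη, hcode⟩ := hsf2 β hβK (f β) hfβ
      have hptK : ν.ord * β + η < κ.ord := blk_lt_K hν hκ hβK hη
      have hptna : ν.ord * β + η ∉ a := fun hmem =>
        absurd (hbeyond hbd hβ0le _ hmem) (lt_irrefl _)
      refine ⟨insert (ν.ord * β + η) t, ⟨?_, ?_⟩, ?_⟩
      · exact insert_subset hptK (hta.trans ha1)
      · ext z
        simp only [mem_inter_iff, mem_insert_iff]
        constructor
        · rintro ⟨rfl | hz, hza⟩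
          · exact absurd hza hptna
          · exact hz
        · intro hz
          exact ⟨Or.inr hz, hta hz⟩
      · refine ⟨insert_subset hptK (hta.trans (ha1.trans (fun _ h => h))), β, hβK, η, hη,
          mem_insert _ _, ?_, hcode⟩
        intro η' hη' hmem'
        rcases hmem' with h | h
        · exact absurd (add_left_cancel_iff.mp h) hη'.ne
        · exact absurd (hbeyond hbd hβ0le _ (hta h)) (lt_irrefl _)
  have hWmeager : ∀ f ∈ F, Meager ν κ (W f) := by
    intro f hf
    refine ⟨fun x hx => hx.1, {D f}, ⟨D f, rfl⟩, ?_, ?_, ?_⟩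
    · rw [Cardinal.mk_singleton]
      calc (1 : Cardinal.{1}) ≤ ℵ₀ := one_le_aleph0
        _ = Cardinal.lift.{1} ℵ₀ := Cardinal.lift_aleph0.{1,0}.symm
        _ ≤ Cardinal.lift.{1} ν := Cardinal.lift_le.mpr hν.aleph0_le
    · rintro D' rfl
      exact hDopen f hf
    · rw [sInter_singleton]
      ext x
      simp only [mem_inter_iff, mem_empty_iff_false, iff_false, not_and]
      rintro ⟨hxsub, hxW⟩ ⟨-, β, hβ, η, hη, hmem, hmin, hcode⟩
      exact hxW β hβ (hcode ▸ (gx_eq x β η hβ hη hmem hmin).symm)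
  refine ⟨W '' F, ⟨?_, ?_⟩, Cardinal.mk_image_le⟩
  · rintro W' ⟨f, hf, rfl⟩
    exact hWmeager f hf
  · apply subset_antisymm
    · apply sUnion_subset
      rintro W' ⟨f, hf, rfl⟩
      exact fun x hx => hx.1
    · intro x hx
      obtain ⟨f, hf, hempty⟩ := hFprop (gx x) (hgxfun x)
      refine ⟨W f, ⟨f, hf, rfl⟩, hx, ?_⟩
      intro α hα heq
      exact (eq_empty_iff_forall_notMem.mp hempty α) ⟨hα, heq⟩

end UneqAux

/-- If `κ` is the successor of a regular infinite cardinal `ν`, then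
`U_κ ≥ min(d_κ, cov(M_{ν,κ}))`. -/
theorem uneq_ge_min (ν κ : Cardinal.{0}) (hν : ν.IsRegular) (hκ : κ = Order.succ ν) :
    min (domNum κ) (covM ν κ) ≤ uneq κ := by
  classical
  rw [uneq, leastCard]
  refine le_csInf (UneqAux.uneqSet_nonempty hν hκ) ?_
  rintro c ⟨F, ⟨hFsub, hFprop⟩, hc⟩
  by_cases hd : domNum κ ≤ c
  · exact (min_le_left _ _).trans hd
  · obtain ⟨G', hG', hcatch⟩ := UneqAux.exists_catcher hν hκ hFsub hc hd
    obtain ⟨Y, hY, hYle⟩ := UneqAux.exists_cover hν hκ hFprop hG' hcatch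
    have hYle' : #Y ≤ Cardinal.lift.{1} c := hYle.trans (le_of_eq hc.symm)
    obtain ⟨c₂, hc₂⟩ := Cardinal.mem_range_lift_of_le hYle'
    have h2le : c₂ ≤ c := by rwa [← Cardinal.lift_le.{1}, hc₂]
    have hcov : covM ν κ ≤ c₂ := by
      rw [covM, leastCard]
      exact csInf_le' ⟨Y, hY, hc₂⟩
    exact (min_le_right _ _).trans (hcov.trans h2le)


end PaperFormal
end

section
/- Suppose κ is the successor of an infinite cardinal and 2^{<κ} = κ. Then U_κ = d_κ. -/
open Cardinal Set

namespace PaperFormal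

private lemma exists_enum {X : Type 1} (A : Set X) (mu : Cardinal.{0}) (hA : A.Nonempty)
    (hcard : #A ≤ Cardinal.lift.{1} mu) :
    ∃ U : Ordinal.{0} → X, (∀ δ, U δ ∈ A) ∧ ∀ g ∈ A, ∃ δ < mu.ord, U δ = g := by
  classical
  have hmk : #(Set.Iio mu.ord) = Cardinal.lift.{1} mu := by
    rw [Ordinal.mk_Iio_ordinal, Cardinal.card_ord]
  rw [← hmk] at hcard
  obtain ⟨e⟩ := (Cardinal.le_def _ _).mp hcard
  haveI : Nonempty A := hA.to_subtype
  refine ⟨fun δ => if h : δ < mu.ord then (Function.invFun e ⟨δ, h⟩ : A).1 else hA.some, ?_, ?_⟩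
  · intro δ
    by_cases h : δ < mu.ord
    · simp only [dif_pos h]; exact (Function.invFun e ⟨δ, h⟩).2
    · simp only [dif_neg h]; exact hA.some_mem
  · intro g hg
    have h2 : ((e ⟨g, hg⟩ : Set.Iio mu.ord) : Ordinal) < mu.ord := (e ⟨g, hg⟩).2
    refine ⟨(e ⟨g, hg⟩ : Set.Iio mu.ord).1, h2, ?_⟩
    simp only [dif_pos h2]
    exact congrArg Subtype.val (Function.leftInverse_invFun e.injective ⟨g, hg⟩)

private def canon (s t : Ordinal.{0}) : Set (Ordinal.{0} → Ordinal.{0}) :=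
  {f | (∀ α, α < s → f α < t) ∧ ∀ α, ¬ α < s → f α = 0}

private lemma mk_canon (s t : Ordinal.{0}) :
    #(canon s t) = Cardinal.lift.{1} (t.card ^ s.card) := by
  have e : canon s t ≃ (Set.Iio s → Set.Iio t) :=
    { toFun := fun f a => ⟨f.1 a.1, f.2.1 a.1 a.2⟩
      invFun := fun F => ⟨fun α => if h : α < s then (F ⟨α, h⟩).1 else 0,
        fun α hα => by simp only [dif_pos hα]; exact (F ⟨α, hα⟩).2,
        fun α hα => by simp only [dif_neg hα]⟩
      left_inv := fun f => by
        apply Subtype.ext; funext α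
        by_cases h : α < s
        · simp only [dif_pos h]
        · simp only [dif_neg h]; exact (f.2.2 α h).symm
      right_inv := fun F => by
        funext a
        apply Subtype.ext
        have h2 : a.1 < s := a.2
        simp only [dif_pos h2] }
  rw [Cardinal.mk_congr e, ← Cardinal.power_def, Ordinal.mk_Iio_ordinal,
    Ordinal.mk_Iio_ordinal, ← Cardinal.lift_power]

private noncomputable def lcF (ν : Cardinal.{0}) (β : Ordinal.{0}) : Ordinal.{0} :=
  ν.ord * (β / ν.ord + 1)

private lemma lcF_eq (ν : Cardinal.{0}) (β : Ordinal.{0}) :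
    lcF ν β = ν.ord * (β / ν.ord) + ν.ord := by
  rw [lcF, Ordinal.add_one_eq_succ, Ordinal.mul_succ]

private lemma lt_lcF {ν : Cardinal.{0}} (hν : ν.ord ≠ 0) (β : Ordinal.{0}) : β < lcF ν β := by
  rw [lcF_eq]
  conv_lhs => rw [← Ordinal.div_add_mod β ν.ord]
  exact add_lt_add_right (Ordinal.mod_lt β hν) _

private noncomputable def restr (s : Ordinal.{0}) (f : Ordinal.{0} → Ordinal.{0}) :
    Ordinal.{0} → Ordinal.{0} :=
  fun α => if α < s then f α else 0

/-- If `κ` is a successor cardinal and `2^{<κ} = κ`, then `U_κ = d_κ`. -/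
theorem uneq_eq_domNum (ν κ : Cardinal.{0}) (hν : ℵ₀ ≤ ν) (hκ : κ = Order.succ ν)
    (h2 : (2 : Cardinal.{0}) ^< κ = κ) :
    uneq κ = domNum κ := by
  classical
  have hκreg : κ.IsRegular := hκ ▸ Cardinal.isRegular_succ hν
  have hκinf : ℵ₀ ≤ κ := hκreg.aleph0_le
  have hνκ : ν < κ := hκ ▸ Order.lt_succ ν
  have hκpos : (0 : Ordinal) < κ.ord := by
    rw [Cardinal.lt_ord, Ordinal.card_zero]; exact hκreg.pos
  have hνord : ν.ord ≠ 0 := by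
    intro h
    have h0 : (0 : Ordinal) < ν.ord := by
      rw [Cardinal.lt_ord, Ordinal.card_zero]
      exact lt_of_lt_of_le Cardinal.aleph0_pos hν
    rw [h] at h0; exact lt_irrefl _ h0
  have hκlim : Order.IsSuccLimit κ.ord := Cardinal.isSuccLimit_ord hκinf
  have hcard_le : ∀ s : Ordinal, s < κ.ord → s.card ≤ ν := by
    intro s hs
    have h1 := Cardinal.lt_ord.mp hs
    rw [hκ] at h1
    exact Order.lt_succ_iff.mp h1
  have hκν : κ ^ ν = κ := by
    have h2ν : (2 : Cardinal) ^ ν = κ := by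
      rw [← h2, hκ, Cardinal.powerlt_succ two_ne_zero]
    calc κ ^ ν = ((2 : Cardinal) ^ ν) ^ ν := by rw [h2ν]
      _ = (2 : Cardinal) ^ (ν * ν) := (Cardinal.power_mul).symm
      _ = (2 : Cardinal) ^ ν := by rw [Cardinal.mul_eq_self hν]
      _ = κ := h2ν
  have hcanon_le : ∀ s : Ordinal, s < κ.ord → #(canon s κ.ord) ≤ Cardinal.lift.{1} κ := by
    intro s hs
    rw [mk_canon, Cardinal.lift_le, Cardinal.card_ord]
    calc κ ^ s.card ≤ κ ^ ν := Cardinal.power_le_power_left hκreg.pos.ne' (hcard_le s hs)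
      _ = κ := hκν
  have hzero_mem : ∀ s : Ordinal, (fun _ : Ordinal => (0 : Ordinal)) ∈ canon s κ.ord :=
    fun s => ⟨fun _ _ => hκpos, fun _ _ => rfl⟩
  have hlc_lt : ∀ β, β < κ.ord → lcF ν β < κ.ord := by
    intro β hβ
    have hdiv : β / ν.ord ≤ β := by
      rw [Ordinal.div_le hνord]
      calc β < Order.succ β := Order.lt_succ β
        _ = 1 * Order.succ β := (one_mul _).symm
        _ ≤ ν.ord * Order.succ β := by
            apply mul_le_mul_left
            rwa [Ordinal.one_le_iff_ne_zero]
    have hsucc : β / ν.ord + 1 < κ.ord := by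
      rw [Ordinal.add_one_eq_succ]
      exact hκlim.succ_lt (lt_of_le_of_lt hdiv hβ)
    rw [Cardinal.lt_ord, lcF, Ordinal.card_mul, Cardinal.card_ord]
    calc ν * (β / ν.ord + 1).card ≤ ν * ν := mul_le_mul_right (hcard_le _ hsucc) ν
      _ = ν := Cardinal.mul_eq_self hν
      _ < κ := hνκ
  -- enumerations of `canon s κ.ord`
  have hUex : ∀ s : Ordinal, ∃ U : Ordinal → (Ordinal → Ordinal), s < κ.ord →
      (∀ δ, U δ ∈ canon s κ.ord) ∧ ∀ g ∈ canon s κ.ord, ∃ δ < κ.ord, U δ = g := by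
    intro s
    by_cases hs : s < κ.ord
    · obtain ⟨U, hU1, hU2⟩ := exists_enum (canon s κ.ord) κ ⟨_, hzero_mem s⟩ (hcanon_le s hs)
      exact ⟨U, fun _ => ⟨hU1, hU2⟩⟩
    · exact ⟨fun _ _ => 0, fun h => absurd h hs⟩
  choose U hU using hUex
  -- enumerations of `Iio δ` with indices below `ν.ord`
  have hσex : ∀ δ : Ordinal, ∃ σ : Ordinal → Ordinal, 0 < δ → δ < κ.ord →
      (∀ i, σ i < δ) ∧ ∀ γ < δ, ∃ i < ν.ord, σ i = γ := by
    intro δ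
    by_cases hδ : 0 < δ ∧ δ < κ.ord
    · have hle : #(Set.Iio δ) ≤ Cardinal.lift.{1} ν := by
        rw [Ordinal.mk_Iio_ordinal, Cardinal.lift_le]
        exact hcard_le δ hδ.2
      obtain ⟨σ, hσ1, hσ2⟩ := exists_enum (Set.Iio δ) ν ⟨0, hδ.1⟩ hle
      exact ⟨σ, fun _ _ => ⟨fun i => hσ1 i, fun γ hγ => hσ2 γ hγ⟩⟩
    · exact ⟨fun _ => 0, fun h1 h2 => absurd ⟨h1, h2⟩ hδ⟩
  choose σ hσ using hσex
  have hrf_mem : ∀ f ∈ funOn κ, ∀ s, s < κ.ord → restr s f ∈ canon s κ.ord := by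
    intro f hf s hs
    constructor
    · intro α hα
      rw [restr, if_pos hα]
      exact hf α (hα.trans hs)
    · intro α hα
      rw [restr, if_neg hα]
  -- code functions
  have hdex : ∀ f, f ∈ funOn κ → ∃ df : Ordinal → Ordinal, df ∈ funOn κ ∧
      ∀ β < κ.ord, ∃ δ < κ.ord, df β = δ + 1 ∧ U (lcF ν β) δ = restr (lcF ν β) f := by
    intro f hf
    have hch : ∀ β : Ordinal, ∃ δ : Ordinal, β < κ.ord →
        δ < κ.ord ∧ U (lcF ν β) δ = restr (lcF ν β) f := by
      intro β
      by_cases hβ : β < κ.ord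
      · obtain ⟨δ, hδ, hUeq⟩ := (hU (lcF ν β) (hlc_lt β hβ)).2 (restr (lcF ν β) f)
          (hrf_mem f hf (lcF ν β) (hlc_lt β hβ))
        exact ⟨δ, fun _ => ⟨hδ, hUeq⟩⟩
      · exact ⟨0, fun h => absurd h hβ⟩
    choose δf hδf using hch
    refine ⟨fun β => if h : β < κ.ord then δf β + 1 else 0, ?_, ?_⟩
    · intro β hβ
      simp only [dif_pos hβ]
      rw [Ordinal.add_one_eq_succ]
      exact hκlim.succ_lt (hδf β hβ).1
    · intro β hβ
      exact ⟨δf β, (hδf β hβ).1, by simp only [dif_pos hβ], (hδf β hβ).2⟩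
  choose! d hd1 hd2 using hdex
  -- the canonical big family
  have hFall_sub : canon κ.ord κ.ord ⊆ funOn κ := fun f hf α hα => hf.1 α hα
  have hFall_card : Cardinal.lift.{1} (κ ^ κ) = #(canon κ.ord κ.ord) := by
    rw [mk_canon, Cardinal.card_ord]
  have hFall_dom : ∀ g ∈ funOn κ, ∃ f ∈ canon κ.ord κ.ord, ∀ α < κ.ord, g α < f α := by
    intro g hg
    refine ⟨fun α => if h : α < κ.ord then g α + 1 else 0, ⟨?_, ?_⟩, ?_⟩
    · intro α hα
      simp only [dif_pos hα]
      rw [Ordinal.add_one_eq_succ]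
      exact hκlim.succ_lt (hg α hα)
    · intro α hα
      simp only [dif_neg hα]
    · intro α hα
      simp only [dif_pos hα]
      rw [Ordinal.add_one_eq_succ]
      exact Order.lt_succ _
  have hFall_av : ∀ g ∈ funOn κ, ∃ f ∈ canon κ.ord κ.ord,
      {α | α < κ.ord ∧ f α = g α} = ∅ := by
    intro g hg
    obtain ⟨f, hf, hdom⟩ := hFall_dom g hg
    refine ⟨f, hf, ?_⟩
    apply Set.eq_empty_iff_forall_notMem.mpr
    rintro a ⟨ha, heq⟩
    have := hdom a ha
    rw [heq] at this
    exact lt_irrefl _ this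
  -- the main (hard) direction
  have main : ∀ c : Cardinal.{0}, (∃ F, (F ⊆ funOn κ ∧
      ∀ g ∈ funOn κ, ∃ f ∈ F, {α | α < κ.ord ∧ f α = g α} = ∅) ∧
      Cardinal.lift.{1} c = #F) → domNum κ ≤ c := by
    rintro c ⟨F, ⟨hFsub, hFav⟩, hcF⟩
    by_contra hnle
    push_neg at hnle
    set D := d '' F with hD
    have hDsub : D ⊆ funOn κ := by
      rintro _ ⟨f, hf, rfl⟩
      exact hd1 f (hFsub hf)
    have hDcard : #D ≤ Cardinal.lift.{1} c := by
      rw [hcF]; exact Cardinal.mk_image_le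
    obtain ⟨c2, hc2⟩ := Cardinal.mem_range_lift_of_le hDcard
    have hc2le : c2 ≤ c := by
      rw [← Cardinal.lift_le.{1}, hc2]; exact hDcard
    have hDnotdom : ¬ (D ⊆ funOn κ ∧ ∀ g ∈ funOn κ, ∃ f ∈ D, ∀ α < κ.ord, g α < f α) := by
      intro hP
      have hle : domNum κ ≤ c2 := by
        unfold domNum leastCard
        exact csInf_le (OrderBot.bddBelow _) ⟨D, hP, hc2⟩
      exact absurd (hle.trans hc2le) (not_le.mpr hnle)
    have hD2 : ∃ g ∈ funOn κ, ∀ f' ∈ D, ¬ ∀ α < κ.ord, g α < f' α := by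
      by_contra hno
      push_neg at hno
      exact hDnotdom ⟨hDsub, hno⟩
    obtain ⟨g0, hg0, hesc⟩ := hD2
    set T : Ordinal → Ordinal := fun s => Ordinal.bsup s (fun γ _ => g0 γ) with hT
    have hT_lt : ∀ s, s < κ.ord → T s < κ.ord := by
      intro s hs
      apply Ordinal.bsup_lt_ord
      · rw [hκreg.cof_eq]
        exact lt_of_le_of_lt (hcard_le s hs) hνκ
      · intro γ hγ
        exact hg0 γ (hγ.trans hs)
    have hle_T : ∀ β, g0 β ≤ T (lcF ν β) :=
      fun β => Ordinal.le_bsup (fun γ _ => g0 γ) β (lt_lcF hνord β)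
    set x : Ordinal → Ordinal := fun α =>
      if hα : α < κ.ord then
        (if 0 < T (lcF ν α) then U (lcF ν α) (σ (T (lcF ν α)) (α % ν.ord)) α else 0)
      else 0 with hx
    have hx_mem : x ∈ funOn κ := by
      intro α hα
      rw [hx]
      simp only [dif_pos hα]
      by_cases hT0 : 0 < T (lcF ν α)
      · rw [if_pos hT0]
        exact ((hU (lcF ν α) (hlc_lt α hα)).1 _).1 α (lt_lcF hνord α)
      · rw [if_neg hT0]
        exact hκpos
    obtain ⟨f, hfF, hfav⟩ := hFav x hx_mem
    have hescf := hesc (d f) ⟨f, hfF, rfl⟩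
    push_neg at hescf
    obtain ⟨β, hβ, hge⟩ := hescf
    obtain ⟨δc, hδcκ, hdfβ, hUeq⟩ := hd2 f (hFsub hfF) β hβ
    have hδlt : δc < g0 β := by
      have h1 : δc + 1 ≤ g0 β := by rw [← hdfβ]; exact hge
      rw [Ordinal.add_one_eq_succ, Order.succ_le_iff] at h1
      exact h1
    have hδT : δc < T (lcF ν β) := lt_of_lt_of_le hδlt (hle_T β)
    have hTpos : (0 : Ordinal) < T (lcF ν β) := lt_of_le_of_lt (zero_le (a := δc)) hδT
    obtain ⟨i, hiν, hσi⟩ :=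
      (hσ (T (lcF ν β)) hTpos (hT_lt (lcF ν β) (hlc_lt β hβ))).2 δc hδT
    set α := ν.ord * (β / ν.ord) + i with hα_def
    have hαs : α < lcF ν β := by
      rw [lcF_eq]
      exact add_lt_add_right hiν _
    have hακ : α < κ.ord := hαs.trans (hlc_lt β hβ)
    have hdivα : α / ν.ord = β / ν.ord := by
      rw [hα_def, Ordinal.mul_add_div _ hνord, Ordinal.div_eq_zero_of_lt hiν, add_zero]
    have hlcα : lcF ν α = lcF ν β := by
      rw [lcF, lcF, hdivα]
    have hmod : α % ν.ord = i := by
      rw [hα_def, Ordinal.mul_add_mod_self, Ordinal.mod_eq_of_lt hiν]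
    have hxα : x α = f α := by
      rw [hx]
      simp only [dif_pos hακ]
      rw [hlcα, hmod, if_pos hTpos, hσi, hUeq, restr, if_pos hαs]
    have hmemα : α ∈ {a | a < κ.ord ∧ f a = x a} := ⟨hακ, hxα.symm⟩
    rw [hfav] at hmemα
    exact hmemα
  have le1 : uneq κ ≤ domNum κ := by
    unfold uneq domNum leastCard
    apply csInf_le_csInf (OrderBot.bddBelow _)
    · exact ⟨κ ^ κ, canon κ.ord κ.ord, ⟨hFall_sub, hFall_dom⟩, hFall_card⟩
    · rintro c ⟨F, ⟨hsub, hdom⟩, hcF⟩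
      refine ⟨F, ⟨hsub, fun g hg => ?_⟩, hcF⟩
      obtain ⟨f, hf, hdomf⟩ := hdom g hg
      refine ⟨f, hf, ?_⟩
      apply Set.eq_empty_iff_forall_notMem.mpr
      rintro a ⟨ha, heq⟩
      have := hdomf a ha
      rw [heq] at this
      exact lt_irrefl _ this
  have le2 : domNum κ ≤ uneq κ := by
    have h1 : uneq κ = sInf {c : Cardinal.{0} | ∃ F, (F ⊆ funOn κ ∧
        ∀ g ∈ funOn κ, ∃ f ∈ F, {α | α < κ.ord ∧ f α = g α} = ∅) ∧
        Cardinal.lift.{1} c = #F} := rfl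
    rw [h1]
    apply le_csInf
    · exact ⟨κ ^ κ, canon κ.ord κ.ord, ⟨hFall_sub, hFall_av⟩, hFall_card⟩
    · rintro c hc
      exact main c hc
  exact le_antisymm le1 le2

end PaperFormal
end

section
/- Suppose κ is a regular limit cardinal. Then every ideal J on κ with cof(J) < U_κ is a weak semi-Q-point; consequently U_κ ≤ non_κ(weak semi-Q-point). -/
open Cardinal Set

namespace PaperFormal

noncomputable section AuxProof

open Cardinal Set Classical
open scoped Ordinal

set_option linter.deprecated false

lemma aux_lift_isRegular {κ : Cardinal.{0}} (h : κ.IsRegular) :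
    (Cardinal.lift.{1} κ).IsRegular := by
  refine ⟨aleph0_le_lift.mpr h.1, ?_⟩
  rw [← Cardinal.lift_ord, ← Ordinal.lift_cof, h.cof_eq]

lemma aux_omega_lt_ord {κ : Cardinal.{0}} (huc : ℵ₀ < κ) : (ω : Ordinal.{0}) < κ.ord := by
  rw [Cardinal.lt_ord, Ordinal.card_omega0]; exact huc

lemma aux_small_mem {κ : Cardinal.{0}} (J : IdealK κ) {S : Set Ordinal.{0}}
    (hS : S ⊆ Iio κ.ord) (hc : #S < Cardinal.lift.{1} κ) : S ∈ J.mem := by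
  have h1 : ⋃₀ ((fun α => ({α} : Set Ordinal.{0})) '' S) = S := by
    ext x
    simp
  rw [← h1]
  apply J.sUnion_mem
  · rintro _ ⟨α, hα, rfl⟩
    exact J.singleton_mem α (hS hα)
  · exact lt_of_le_of_lt Cardinal.mk_image_le hc

lemma aux_union_mem {κ : Cardinal.{0}} (huc : ℵ₀ < κ) (J : IdealK κ) {B D : Set Ordinal.{0}}
    (hB : B ∈ J.mem) (hD : D ∈ J.mem) : B ∪ D ∈ J.mem := by
  rw [← Set.sUnion_pair]
  apply J.sUnion_mem
  · intro x hx
    rcases hx with rfl | rfl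
    · exact hB
    · exact hD
  · have h2 : #({B, D} : Set (Set Ordinal.{0})) ≤ 2 := by
      refine le_trans Cardinal.mk_insert_le ?_
      rw [Cardinal.mk_singleton]
      norm_num
    refine lt_of_le_of_lt h2 (lt_of_lt_of_le ?_ (aleph0_le_lift.mpr huc.le))
    exact_mod_cast Cardinal.nat_lt_aleph0 2

lemma aux_exists_not_mem {κ : Cardinal.{0}} (J : IdealK κ) {A B : Set Ordinal.{0}}
    (hA : A ∈ J.plus) (hB : B ∈ J.mem) : ∃ α ∈ A, α ∉ B := by
  by_contra h
  push_neg at h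
  exact hA.2 (J.subset_mem B hB A h)

/-- Part 1: every ideal with `cof(J) < U_κ` is a weak semi-Q-point. -/
lemma aux_part1 {κ : Cardinal.{0}} (hreg : κ.IsRegular) (huc : ℵ₀ < κ)
    (J : IdealK κ) (hcof : J.cof < uneq κ) : WeakSemiQPoint J := by
  intro A hA f hf1 hf2
  -- Step A: a witness family for cof(J)
  have hcard : #(J.mem) ≤ Cardinal.lift.{1} (2 ^ κ) := by
    calc #(J.mem) ≤ #(𝒫 (Iio κ.ord)) := mk_le_mk_of_subset fun B hB => J.subset_iio B hB
      _ = 2 ^ #(Iio κ.ord) := mk_powerset _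
      _ = 2 ^ Cardinal.lift.{1} κ := by rw [Ordinal.mk_Iio_ordinal, Cardinal.card_ord]
      _ = Cardinal.lift.{1} (2 ^ κ) := by rw [Cardinal.lift_power, Cardinal.lift_two]
  obtain ⟨c0, -, hc0⟩ := Cardinal.le_lift_iff.mp hcard
  have hmemS : J.cof ∈ {c : Cardinal.{0} | ∃ X : Set (Set Ordinal.{0}),
      (X ⊆ J.mem ∧ ∀ A, A ∈ J.mem ↔ ∃ B ∈ X, A ⊆ B) ∧ Cardinal.lift.{1} c = #X} := by
    apply csInf_mem
    exact ⟨c0, J.mem, ⟨Set.Subset.rfl, fun A =>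
      ⟨fun h => ⟨A, h, Set.Subset.rfl⟩, fun ⟨B, hB, hAB⟩ => J.subset_mem B hB A hAB⟩⟩, hc0⟩
  obtain ⟨X, ⟨hXsub, hXcov⟩, hXcard⟩ := hmemS
  -- Step B: the selection functions
  set P : Set Ordinal.{0} → Ordinal.{0} → Prop := fun B ξ =>
    ∃ α, α ∈ A ∧ α ∉ B ∧ ξ ≤ f α ∧ (ω : Ordinal.{0}) ≤ f α with hPdef
  have hex : ∀ B ∈ J.mem, ∀ ξ < κ.ord, P B ξ := by
    intro B hB ξ hξ
    have hμ : max ξ ω < κ.ord := max_lt hξ (aux_omega_lt_ord huc)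
    have hD : {α | α ∈ A ∧ f α < max ξ ω} ∈ J.mem := by
      have heq : {α | α ∈ A ∧ f α < max ξ ω} =
          ⋃₀ ((fun β => {α | α ∈ A ∧ f α = β}) '' (Iio (max ξ ω))) := by
        ext α
        simp only [Set.mem_sUnion, Set.mem_image, Set.mem_setOf_eq, Set.mem_Iio]
        constructor
        · rintro ⟨hαA, hlt⟩
          exact ⟨_, ⟨f α, hlt, rfl⟩, hαA, rfl⟩
        · rintro ⟨_, ⟨β, hβ, rfl⟩, hαA, hfα⟩
          exact ⟨hαA, hfα ▸ hβ⟩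
      rw [heq]
      apply J.sUnion_mem
      · rintro _ ⟨β, _, rfl⟩
        apply aux_small_mem J
        · intro α hα
          exact hA.1 hα.1
        · exact hf2 β
      · refine lt_of_le_of_lt Cardinal.mk_image_le ?_
        rw [Ordinal.mk_Iio_ordinal]
        exact Cardinal.lift_lt.mpr (Cardinal.lt_ord.mp hμ)
    obtain ⟨α, hαA, hα⟩ := aux_exists_not_mem J hA (aux_union_mem huc J hB hD)
    have hα1 : α ∉ B := fun h => hα (Or.inl h)
    have hα2 : ¬ (f α < max ξ ω) := fun h => hα (Or.inr ⟨hαA, h⟩)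
    rw [not_lt, max_le_iff] at hα2
    exact ⟨α, hαA, hα1, hα2.1, hα2.2⟩
  set g : Set Ordinal.{0} → Ordinal.{0} → Ordinal.{0} := fun B ξ =>
    if h : P B ξ then h.choose else 0 with hgdef
  set F : Set (Ordinal.{0} → Ordinal.{0}) := g '' X with hFdef
  have hFsub : F ⊆ funOn κ := by
    rintro _ ⟨B, hB, rfl⟩ ξ hξ
    by_cases h : P B ξ
    · have : g B ξ = h.choose := dif_pos h
      rw [this]
      exact hA.1 h.choose_spec.1
    · have : g B ξ = 0 := dif_neg h
      rw [this]
      exact lt_of_lt_of_le Ordinal.omega0_pos (aux_omega_lt_ord huc).le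
  -- Step C: get a function agreeing with each g_B
  have hnot : ¬ (F ⊆ funOn κ ∧ ∀ g' ∈ funOn κ, ∃ f' ∈ F,
      {α | α < κ.ord ∧ f' α = g' α} = ∅) := by
    intro hprop
    have hFle : #F ≤ Cardinal.lift.{1} J.cof := by
      rw [hXcard]
      exact Cardinal.mk_image_le
    obtain ⟨c, -, hc⟩ := Cardinal.le_lift_iff.mp hFle
    have h1 : uneq κ ≤ c := csInf_le' ⟨F, hprop, hc⟩
    have h2 : c ≤ J.cof := Cardinal.lift_le.mp (by rw [hc]; exact hFle)
    exact absurd ((h1.trans h2).trans_lt hcof) (lt_irrefl _)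
  have hmain : ∃ h0 ∈ funOn κ, ∀ f' ∈ F, {α | α < κ.ord ∧ f' α = h0 α} ≠ ∅ := by
    by_contra hcon
    push_neg at hcon
    exact hnot ⟨hFsub, hcon⟩
  obtain ⟨h0, _, hh0⟩ := hmain
  -- Step D: the positive slim set
  set C : Set Ordinal.{0} := {α | ∃ ξ, ξ < κ.ord ∧ h0 ξ = α ∧ α ∈ A ∧ ξ ≤ f α ∧
    (ω : Ordinal.{0}) ≤ f α} with hCdef
  have hCA : C ⊆ A := by
    rintro α ⟨ξ, _, _, h, _, _⟩
    exact h
  refine ⟨C, ⟨fun α hα => hA.1 (hCA hα), ?_⟩, hCA, ?_⟩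
  · -- C is J-positive
    intro hCmem
    obtain ⟨B, hBX, hCB⟩ := (hXcov C).mp hCmem
    have hne := hh0 (g B) ⟨B, hBX, rfl⟩
    obtain ⟨ξ, hξlt, heq⟩ := Set.nonempty_iff_ne_empty.mpr hne
    have hPB : P B ξ := hex B (hXsub hBX) ξ hξlt
    have hgB : g B ξ = hPB.choose := dif_pos hPB
    obtain ⟨hs1, hs2, hs3, hs4⟩ := hPB.choose_spec
    have hmemC : hPB.choose ∈ C := ⟨ξ, hξlt, by rw [← heq, hgB], hs1, hs3, hs4⟩
    exact hs2 (hCB hmemC)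
  · -- C is slim
    intro β hβ
    rcases lt_or_ge β ω with hlt | hge
    · have hempty : {α ∈ C | f α = β} = ∅ := by
        ext α
        simp only [Set.mem_setOf_eq, Set.mem_empty_iff_false, iff_false, not_and]
        rintro ⟨ξ, _, _, _, _, hω⟩ rfl
        exact absurd hlt (not_lt.mpr hω)
      rw [hempty]
      simp
    · have hsub : {α ∈ C | f α = β} ⊆ h0 '' (Iic β) := by
        rintro α ⟨⟨ξ, hξlt, hh, hαA, hξf, hωf⟩, hfβ⟩
        exact ⟨ξ, by rw [Set.mem_Iic]; rw [hfβ] at hξf; exact hξf, hh⟩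
      calc #({α ∈ C | f α = β}) ≤ #(h0 '' Iic β) := mk_le_mk_of_subset hsub
        _ ≤ #(Iic β) := Cardinal.mk_image_le
        _ = Cardinal.lift.{1} β.card := by
            rw [← Order.Iio_succ, Ordinal.mk_Iio_ordinal, Ordinal.card_succ,
              Cardinal.add_one_eq (Ordinal.aleph0_le_card.mpr hge)]

/-- The canonical fiber function used for the bad ideal. -/
def auxF : Ordinal.{0} → Ordinal.{0} := fun α => max ω (α.card).ord

lemma auxF_lt {κ : Cardinal.{0}} (huc : ℵ₀ < κ) {α : Ordinal.{0}} (hα : α < κ.ord) :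
    auxF α < κ.ord := by
  refine max_lt (aux_omega_lt_ord huc) ?_
  rw [Cardinal.lt_ord, Cardinal.card_ord]
  exact Cardinal.lt_ord.mp hα

lemma auxF_ge (α : Ordinal.{0}) : (ω : Ordinal.{0}) ≤ auxF α := le_max_left _ _

lemma auxF_fiber_subset (β : Ordinal.{0}) :
    {α : Ordinal.{0} | auxF α = β} ⊆ Iio ((Order.succ β.card).ord) := by
  intro α hα
  have h1 : (α.card).ord ≤ β := hα ▸ le_max_right _ _
  have h2 : α.card ≤ β.card := by
    have := Ordinal.card_le_card h1
    rwa [Cardinal.card_ord] at this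
  rw [Set.mem_Iio, Cardinal.lt_ord]
  exact lt_of_le_of_lt h2 (Order.lt_succ _)

lemma auxF_eq_of_card {μ : Cardinal.{0}} (hμ : ℵ₀ ≤ μ) {α : Ordinal.{0}}
    (h : α.card = μ) : auxF α = μ.ord := by
  rw [auxF, h, max_eq_right]
  rw [← Cardinal.ord_aleph0]
  exact Cardinal.ord_le_ord.mpr hμ

/-- Slimness with respect to `auxF`. -/
def auxSlim (C : Set Ordinal.{0}) : Prop :=
  ∀ β : Ordinal.{0}, #({α ∈ C | auxF α = β}) ≤ Cardinal.lift.{1} β.card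

/-- The bad ideal: sets covered by fewer than `κ` slim sets. -/
def auxBadMem (κ : Cardinal.{0}) : Set (Set Ordinal.{0}) :=
  {Z | Z ⊆ Iio κ.ord ∧ ∃ X : Set (Set Ordinal.{0}), #X < Cardinal.lift.{1} κ ∧
    (∀ C ∈ X, auxSlim C) ∧ Z ⊆ ⋃₀ X}

lemma aux_exists_bad {κ : Cardinal.{0}} (hreg : κ.IsRegular) (huc : ℵ₀ < κ)
    (hlim : κ ≠ 0 ∧ Order.IsSuccPrelimit κ) : ∃ J : IdealK κ, ¬ WeakSemiQPoint J := by
  have hℵκ : ℵ₀ ≤ Cardinal.lift.{1} κ := aleph0_le_lift.mpr huc.le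
  have hone : (1 : Cardinal.{1}) < Cardinal.lift.{1} κ :=
    lt_of_lt_of_le Cardinal.one_lt_aleph0 hℵκ
  -- singletons are slim
  have hslim_single : ∀ α : Ordinal.{0}, auxSlim {α} := by
    intro α β
    by_cases hβ : auxF α = β
    · have hsub : {γ ∈ ({α} : Set Ordinal.{0}) | auxF γ = β} ⊆ {α} := fun γ hγ => hγ.1
      refine le_trans (mk_le_mk_of_subset hsub) ?_
      rw [Cardinal.mk_singleton]
      have : ℵ₀ ≤ β.card := by
        rw [Ordinal.aleph0_le_card, ← hβ]
        exact auxF_ge α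
      calc (1 : Cardinal.{1}) ≤ ℵ₀ := Cardinal.one_lt_aleph0.le
        _ ≤ Cardinal.lift.{1} β.card := by
            rw [← Cardinal.lift_aleph0.{1,0}]
            exact Cardinal.lift_le.mpr this
    · have hempty : {γ ∈ ({α} : Set Ordinal.{0}) | auxF γ = β} = ∅ := by
        ext γ
        simp only [Set.mem_setOf_eq, Set.mem_singleton_iff, Set.mem_empty_iff_false, iff_false,
          not_and]
        rintro rfl
        exact hβ
      rw [hempty]
      simp
  -- the bad ideal is proper
  have hne_top : Iio κ.ord ∉ auxBadMem κ := by
    rintro ⟨-, X, hXcard, hXslim, hXcov⟩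
    obtain ⟨lam, -, hlam⟩ := Cardinal.le_lift_iff.mp hXcard.le
    have hlamκ : lam < κ := Cardinal.lift_lt.mp (by rw [hlam]; exact hXcard)
    set μ : Cardinal.{0} := max lam ℵ₀ with hμdef
    have hμinf : ℵ₀ ≤ μ := le_max_right _ _
    have hμκ : μ < κ := max_lt hlamκ huc
    have hsuccle : (Order.succ μ).ord ≤ κ.ord := Cardinal.ord_le_ord.mpr (Order.succ_le_of_lt hμκ)
    set S : Set Ordinal.{0} := Ico μ.ord ((Order.succ μ).ord) with hSdef
    have hScard : Cardinal.lift.{1} μ < #S := by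
      by_contra h
      push_neg at h
      have h1 : Iio ((Order.succ μ).ord) = Iio μ.ord ∪ S :=
        (Set.Iio_union_Ico_eq_Iio (Cardinal.ord_le_ord.mpr (Order.le_succ μ))).symm
      have h2 : Cardinal.lift.{1} (Order.succ μ) ≤ Cardinal.lift.{1} μ := by
        calc Cardinal.lift.{1} (Order.succ μ) = #(Iio ((Order.succ μ).ord)) := by
              rw [Ordinal.mk_Iio_ordinal, Cardinal.card_ord]
          _ ≤ #(Iio μ.ord) + #S := h1 ▸ Cardinal.mk_union_le _ _
          _ ≤ Cardinal.lift.{1} μ + Cardinal.lift.{1} μ := by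
              rw [Ordinal.mk_Iio_ordinal, Cardinal.card_ord]
              exact add_le_add le_rfl h
          _ = Cardinal.lift.{1} μ := Cardinal.add_eq_self (aleph0_le_lift.mpr hμinf)
      rw [Cardinal.lift_le] at h2
      exact absurd h2 (not_le.mpr (Order.lt_succ μ))
    -- every element of S has auxF value μ.ord
    have hSfib : ∀ α ∈ S, auxF α = μ.ord := by
      rintro α ⟨h1, h2⟩
      refine auxF_eq_of_card hμinf ?_
      have hc1 : μ ≤ α.card := by
        have := Ordinal.card_le_card h1
        rwa [Cardinal.card_ord] at this
      have hc2 : α.card ≤ μ := by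
        have := Cardinal.lt_ord.mp h2
        exact Order.lt_succ_iff.mp this
      exact le_antisymm hc2 hc1
    -- S is covered by X
    have hSsub : S ⊆ Iio κ.ord := fun α hα => lt_of_lt_of_le hα.2 hsuccle
    have hScov : S = ⋃ (C : X), (S ∩ (C : Set Ordinal.{0})) := by
      ext α
      simp only [Set.mem_iUnion, Set.mem_inter_iff]
      constructor
      · intro hα
        obtain ⟨D, hD, hαD⟩ := hXcov (hSsub hα)
        exact ⟨⟨D, hD⟩, hα, hαD⟩
      · rintro ⟨C, hα, -⟩
        exact hα
    have hXne : X.Nonempty := by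
      rcases Set.eq_empty_or_nonempty X with rfl | h
      · exfalso
        have : (0 : Ordinal.{0}) ∈ ⋃₀ (∅ : Set (Set Ordinal.{0})) := by
          apply hXcov
          rw [Set.mem_Iio, Cardinal.lt_ord, Ordinal.card_zero]
          exact lt_of_lt_of_le Cardinal.aleph0_pos huc.le
        simpa using this
      · exact h
    have : #S ≤ Cardinal.lift.{1} μ := by
      have := hXne.to_subtype
      calc #S = #(⋃ (C : X), (S ∩ (C : Set Ordinal.{0}))) := by rw [← hScov]
        _ ≤ #X * ⨆ (C : X), #(S ∩ (C : Set Ordinal.{0}) : Set Ordinal.{0}) :=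
            Cardinal.mk_iUnion_le _
        _ ≤ Cardinal.lift.{1} μ * Cardinal.lift.{1} μ := by
            refine mul_le_mul' ?_ ?_
            · rw [← hlam]
              exact Cardinal.lift_le.mpr (le_max_left _ _)
            · refine ciSup_le fun C => ?_
              have hsub2 : S ∩ (C : Set Ordinal.{0}) ⊆ {α ∈ (C : Set Ordinal.{0}) | auxF α = μ.ord} :=
                fun α hα => ⟨hα.2, hSfib α hα.1⟩
              refine le_trans (mk_le_mk_of_subset hsub2) ?_
              have := hXslim C C.2 μ.ord
              rwa [Cardinal.card_ord] at this
        _ = Cardinal.lift.{1} μ := Cardinal.mul_eq_self (aleph0_le_lift.mpr hμinf)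
    exact absurd this (not_le.mpr hScard)
  -- assemble the ideal
  refine ⟨⟨auxBadMem κ, fun A hA => hA.1, ?_, ?_, ?_, hne_top⟩, ?_⟩
  · -- singletons
    intro α hα
    refine ⟨Set.singleton_subset_iff.mpr hα, {{α}}, ?_, ?_, ?_⟩
    · rw [Cardinal.mk_singleton]
      exact hone
    · rintro C rfl
      exact hslim_single α
    · intro γ hγ
      exact ⟨{α}, rfl, hγ⟩
  · -- subsets
    rintro A ⟨hA1, X, hX1, hX2, hX3⟩ B hBA
    exact ⟨hBA.trans hA1, X, hX1, hX2, hBA.trans hX3⟩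
  · -- unions
    intro Y hY hYcard
    have hchoice : ∀ Z : Y, ∃ X : Set (Set Ordinal.{0}), #X < Cardinal.lift.{1} κ ∧
        (∀ C ∈ X, auxSlim C) ∧ (Z : Set Ordinal.{0}) ⊆ ⋃₀ X := fun Z => (hY Z.2).2
    choose W hW1 hW2 hW3 using hchoice
    refine ⟨?_, ⋃ (Z : Y), W Z, ?_, ?_, ?_⟩
    · intro α hα
      obtain ⟨Z, hZ, hαZ⟩ := hα
      exact (hY hZ).1 hαZ
    · refine lt_of_le_of_lt (Cardinal.mk_iUnion_le _) ?_
      refine Cardinal.mul_lt_of_lt hℵκ hYcard ?_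
      exact Cardinal.iSup_lt_of_isRegular (aux_lift_isRegular hreg) hYcard hW1
    · intro C hC
      obtain ⟨Z, hZC⟩ := Set.mem_iUnion.mp hC
      exact hW2 Z C hZC
    · intro α hα
      obtain ⟨Z, hZ, hαZ⟩ := hα
      obtain ⟨D, hD, hαD⟩ := hW3 ⟨Z, hZ⟩ hαZ
      exact ⟨D, Set.mem_iUnion.mpr ⟨⟨Z, hZ⟩, hD⟩, hαD⟩
  · -- not a weak semi-Q-point
    intro hW
    obtain ⟨C, hCplus, hCsub, hslim⟩ := hW (Iio κ.ord) ⟨Set.Subset.rfl, hne_top⟩ auxF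
      (fun α hα => auxF_lt huc hα)
      (by
        intro β
        rcases lt_or_ge β κ.ord with hβ | hβ
        · refine lt_of_le_of_lt (mk_le_mk_of_subset (fun α hα => auxF_fiber_subset β hα.2)) ?_
          rw [Ordinal.mk_Iio_ordinal, Cardinal.card_ord]
          refine Cardinal.lift_lt.mpr (hlim.2.succ_lt ?_)
          exact Cardinal.lt_ord.mp hβ
        · have : {α ∈ Iio κ.ord | auxF α = β} = ∅ := by
            ext α
            simp only [Set.mem_setOf_eq, Set.mem_Iio, Set.mem_empty_iff_false, iff_false, not_and]
            intro hα hfα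
            exact absurd hβ (not_le.mpr (hfα ▸ auxF_lt huc hα))
          rw [this]
          simpa using lt_of_lt_of_le Cardinal.aleph0_pos hℵκ)
    apply hCplus.2
    refine ⟨hCplus.1, {C}, by rw [Cardinal.mk_singleton]; exact hone, ?_, fun γ hγ => ⟨C, rfl, hγ⟩⟩
    intro D hD
    rw [Set.mem_singleton_iff.mp hD]
    intro β
    rcases lt_or_ge β κ.ord with hβ | hβ
    · exact hslim β hβ
    · have : {α ∈ C | auxF α = β} = ∅ := by
        ext α
        simp only [Set.mem_setOf_eq, Set.mem_empty_iff_false, iff_false, not_and]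
        intro hα hfα
        exact absurd hβ (not_le.mpr (hfα ▸ auxF_lt huc (hCplus.1 hα)))
      rw [this]
      simp

end AuxProof

end PaperFormal

namespace PaperFormal

/-- If `κ` is a regular limit cardinal, then every ideal `J` on `κ` with
`cof(J) < U_κ` is a weak semi-`Q`-point; consequently `U_κ ≤ non_κ(weak semi-Q-point)`. -/
theorem uneq_le_non_weakSemiQPoint (κ : Cardinal.{0}) (hreg : κ.IsRegular) (huc : ℵ₀ < κ)
    (hlim : κ ≠ 0 ∧ Order.IsSuccPrelimit κ) :
    (∀ J : IdealK κ, J.cof < uneq κ → WeakSemiQPoint J) ∧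
      uneq κ ≤ nonK κ (fun J => WeakSemiQPoint J) := by
  refine ⟨fun J hJ => aux_part1 hreg huc J hJ, ?_⟩
  obtain ⟨J₀, hJ₀⟩ := aux_exists_bad hreg huc hlim
  refine le_csInf ⟨J₀.cof, J₀, rfl, hJ₀⟩ ?_
  rintro c ⟨J, rfl, hJ⟩
  by_contra hlt
  push_neg at hlt
  exact hJ (aux_part1 hreg huc J hlt)

end PaperFormal
end

section
/- Let H be an ideal on P_κ(λ) with cof(H) < d^κ_{κ,λ}. Then a_H > κ and H is a weak π-point. -/
open Cardinal Set

namespace PaperFormal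

-- AUXSTART
noncomputable section Aux

open Classical

variable {κ lam : Cardinal.{0}}

/-! ### Generic `leastCard` facts -/

lemma leastCard_spec {X : Type 1} {P : Set X → Prop}
    (h : ∃ c : Cardinal.{0}, ∃ F : Set X, P F ∧ Cardinal.lift.{1} c = #F) :
    ∃ F : Set X, P F ∧ Cardinal.lift.{1} (leastCard P) = #F := by
  have hne : {c : Cardinal.{0} | ∃ F : Set X, P F ∧ Cardinal.lift.{1} c = #F}.Nonempty := h
  exact csInf_mem hne

lemma leastCard_le {X : Type 1} {P : Set X → Prop} {F : Set X} (hP : P F) {c : Cardinal.{0}}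
    (hc : Cardinal.lift.{1} c = #F) : leastCard P ≤ c :=
  csInf_le (OrderBot.bddBelow _) ⟨F, hP, hc⟩

/-! ### Cardinality facts -/

lemma aleph0_le_lift_kappa (hreg : κ.IsRegular) : ℵ₀ ≤ Cardinal.lift.{1} κ := by
  rw [← Cardinal.lift_aleph0.{1,0}]
  exact Cardinal.lift_le.2 hreg.1

lemma zero_lt_lift_kappa (hreg : κ.IsRegular) : 0 < Cardinal.lift.{1} κ :=
  lt_of_lt_of_le Cardinal.aleph0_pos (aleph0_le_lift_kappa hreg)

lemma lift_kappa_isRegular (hreg : κ.IsRegular) : (Cardinal.lift.{1} κ).IsRegular := by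
  constructor
  · exact aleph0_le_lift_kappa hreg
  · rw [← Cardinal.lift_ord, ← Ordinal.lift_cof]
    exact Cardinal.lift_le.2 hreg.2

lemma empty_mem_smallSet (hreg : κ.IsRegular) : (∅ : Set Ordinal.{0}) ∈ smallSet κ lam := by
  refine ⟨Set.empty_subset _, ?_⟩
  rw [Cardinal.mk_emptyCollection]
  exact zero_lt_lift_kappa hreg

lemma singleton_mem_smallSet (hreg : κ.IsRegular) {ξ : Ordinal.{0}} (hξ : ξ < lam.ord) :
    ({ξ} : Set Ordinal.{0}) ∈ smallSet κ lam := by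
  refine ⟨by intro o ho; rcases ho with rfl; exact hξ, ?_⟩
  rw [Cardinal.mk_singleton]
  exact lt_of_lt_of_le Cardinal.one_lt_aleph0 (aleph0_le_lift_kappa hreg)

lemma mk_smallSet_le : #(smallSet κ lam) ≤ Cardinal.lift.{1} (2 ^ lam) := by
  have h1 : #(smallSet κ lam) ≤ #(Set (Set.Iio lam.ord)) := by
    apply Cardinal.mk_le_of_injective
      (f := fun (a : smallSet κ lam) => {ξ : Set.Iio lam.ord | (ξ : Ordinal.{0}) ∈ (a : Set Ordinal.{0})})
    intro a b hab
    have h' : ∀ ξ : Set.Iio lam.ord,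
        (ξ : Ordinal.{0}) ∈ (a : Set Ordinal.{0}) ↔ (ξ : Ordinal.{0}) ∈ (b : Set Ordinal.{0}) :=
      fun ξ => Set.ext_iff.mp hab ξ
    apply Subtype.ext
    ext o
    constructor
    · intro ho; exact (h' ⟨o, a.2.1 ho⟩).mp ho
    · intro ho; exact (h' ⟨o, b.2.1 ho⟩).mpr ho
  have h2 : #(Set (Set.Iio lam.ord)) = Cardinal.lift.{1} (2 ^ lam) := by
    rw [Cardinal.mk_set, Ordinal.mk_Iio_ordinal, Cardinal.card_ord, Cardinal.lift_power,
      Cardinal.lift_two]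
  rwa [h2] at h1

lemma lift_lam_le_mk_smallSet (hreg : κ.IsRegular) :
    Cardinal.lift.{1} lam ≤ #(smallSet κ lam) := by
  have h1 : #(Set.Iio lam.ord) ≤ #(smallSet κ lam) := by
    apply Cardinal.mk_le_of_injective
      (f := fun (ξ : Set.Iio lam.ord) => (⟨{(ξ : Ordinal.{0})}, singleton_mem_smallSet hreg ξ.2⟩ : smallSet κ lam))
    intro a b hab
    apply Subtype.ext
    have h2 := congrArg Subtype.val hab
    simpa [Set.singleton_eq_singleton_iff] using h2
  rwa [Ordinal.mk_Iio_ordinal, Cardinal.card_ord] at h1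

/-- Any collection of subsets of `smallSet κ lam` has small-liftable cardinality. -/
lemma exists_lift_eq_mk {S : Set (Set (Set Ordinal.{0}))} (hS : ∀ A ∈ S, A ⊆ smallSet κ lam) :
    ∃ c : Cardinal.{0}, Cardinal.lift.{1} c = #S := by
  refine Set.mem_range.mp (Cardinal.mem_range_lift_of_le (b := #S) (a := (2 : Cardinal.{0}) ^ ((2 : Cardinal.{0}) ^ lam)) ?_)
  have h1 : #S ≤ #(Set (smallSet κ lam)) := by
    apply Cardinal.mk_le_of_injective
      (f := fun (A : S) => {x : smallSet κ lam | (x : Set Ordinal.{0}) ∈ (A : Set (Set Ordinal.{0}))})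
    intro A B hAB
    have h' : ∀ x : smallSet κ lam,
        (x : Set Ordinal.{0}) ∈ (A : Set (Set Ordinal.{0})) ↔
        (x : Set Ordinal.{0}) ∈ (B : Set (Set Ordinal.{0})) :=
      fun x => Set.ext_iff.mp hAB x
    apply Subtype.ext
    ext x
    constructor
    · intro hx; exact (h' ⟨x, hS A A.2 hx⟩).mp hx
    · intro hx; exact (h' ⟨x, hS B B.2 hx⟩).mpr hx
  have hss : #(smallSet κ lam) ≤ (2 : Cardinal.{1}) ^ Cardinal.lift.{1} lam := by
    have := mk_smallSet_le (κ := κ) (lam := lam)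
    rwa [Cardinal.lift_power, Cardinal.lift_two] at this
  have h2 : #(Set (smallSet κ lam)) ≤
      Cardinal.lift.{1} ((2 : Cardinal.{0}) ^ ((2 : Cardinal.{0}) ^ lam)) := by
    rw [Cardinal.mk_set, Cardinal.lift_power, Cardinal.lift_power, Cardinal.lift_two]
    exact Cardinal.power_le_power_left two_ne_zero hss
  exact h1.trans h2

/-- A union of `< κ` many small sets indexed below `i < κ.ord` is small. -/
lemma unionSmall (hreg : κ.IsRegular) {i : Ordinal.{0}} (hi : i < κ.ord)
    {g : Ordinal.{0} → Set Ordinal.{0}} (hg : ∀ β < κ.ord, g β ∈ smallSet κ lam) :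
    {o : Ordinal.{0} | ∃ β, β ≤ i ∧ β < κ.ord ∧ o ∈ g β} ∈ smallSet κ lam := by
  constructor
  · rintro o ⟨β, _, hβκ, ho⟩
    exact (hg β hβκ).1 ho
  · set t : Set.Iic i → Set Ordinal.{0} :=
      fun β => if h : (β : Ordinal.{0}) < κ.ord then g β else ∅ with ht
    have hsub : {o : Ordinal.{0} | ∃ β, β ≤ i ∧ β < κ.ord ∧ o ∈ g β} ⊆ ⋃ β, t β := by
      rintro o ⟨β, h1, h2, h3⟩
      apply Set.mem_iUnion.2
      refine ⟨⟨β, h1⟩, ?_⟩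
      simp only [ht, dif_pos h2]
      exact h3
    apply lt_of_le_of_lt (Cardinal.mk_le_mk_of_subset hsub)
    apply lt_of_le_of_lt Cardinal.mk_iUnion_le_sum_mk
    apply Cardinal.sum_lt_of_isRegular (lift_kappa_isRegular hreg)
    · have hIic : Set.Iic i = Set.Iio (Order.succ i) := by
        ext j; simp [Order.lt_succ_iff]
      rw [hIic, Ordinal.mk_Iio_ordinal]
      rw [Cardinal.lift_lt]
      rw [← Cardinal.lt_ord]
      exact (Cardinal.isSuccLimit_ord hreg.1).succ_lt hi
    · intro β
      by_cases h : (β : Ordinal.{0}) < κ.ord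
      · simp only [ht, dif_pos h]
        exact (hg β h).2
      · simp only [ht, dif_neg h]
        rw [Cardinal.mk_emptyCollection]
        exact zero_lt_lift_kappa hreg

/-! ### Ideal facts -/

lemma empty_mem_Ikl (hreg : κ.IsRegular) : (∅ : Set (Set Ordinal.{0})) ∈ Ikl κ lam :=
  ⟨Set.empty_subset _, ⟨∅, empty_mem_smallSet hreg, by intro b hb; exact absurd hb (by simp)⟩⟩

lemma IdealP.union_mem' (hreg : κ.IsRegular) (H : IdealP κ lam) {A B : Set (Set Ordinal.{0})}
    (hA : A ∈ H.mem) (hB : B ∈ H.mem) : A ∪ B ∈ H.mem := by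
  have h : A ∪ B = ⋃₀ {A, B} := by rw [Set.sUnion_pair]
  rw [h]
  apply H.sUnion_mem
  · intro C hC
    rcases hC with rfl | hC
    · exact hA
    · rcases hC with rfl; exact hB
  · apply lt_of_lt_of_le _ (aleph0_le_lift_kappa hreg)
    exact Set.Finite.lt_aleph0 (by simp)

lemma IdealP.biUnion_mem (hreg : κ.IsRegular) (H : IdealP κ lam) {β : Ordinal.{0}}
    (hβ : β < κ.ord) {s : Ordinal.{0} → Set (Set Ordinal.{0})} (hs : ∀ i < β, s i ∈ H.mem) :
    {x | ∃ i < β, x ∈ s i} ∈ H.mem := by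
  have h : {x | ∃ i < β, x ∈ s i} = ⋃₀ ((fun i => if i < β then s i else ∅) '' Set.Iio β) := by
    ext x
    simp only [Set.sUnion_image, Set.mem_iUnion, Set.mem_setOf_eq, Set.mem_Iio]
    constructor
    · rintro ⟨i, hi, hx⟩; exact ⟨i, hi, by rwa [if_pos hi]⟩
    · rintro ⟨i, hi, hx⟩; rw [if_pos hi] at hx; exact ⟨i, hi, hx⟩
  rw [h]
  apply H.sUnion_mem
  · rintro C ⟨i, hi, rfl⟩
    have hi' : i < β := hi
    show (if i < β then s i else ∅) ∈ H.mem
    rw [if_pos hi']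
    exact hs i hi'
  · apply lt_of_le_of_lt Cardinal.mk_image_le
    rw [Ordinal.mk_Iio_ordinal, Cardinal.lift_lt, ← Cardinal.lt_ord]
    exact hβ

/-- Least index of membership. -/
lemma exists_least_index {f : Ordinal.{0} → Set (Set Ordinal.{0})} {x : Set Ordinal.{0}}
    (h : ∃ α, α < κ.ord ∧ x ∈ f α) :
    ∃ i, i < κ.ord ∧ x ∈ f i ∧ (∀ j < i, x ∉ f j) ∧ ∀ α, α < κ.ord → x ∈ f α → i ≤ α := by
  set T := {α : Ordinal.{0} | α < κ.ord ∧ x ∈ f α} with hT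
  have hne : T.Nonempty := by rcases h with ⟨α, h1, h2⟩; exact ⟨α, h1, h2⟩
  have hmem : sInf T ∈ T := csInf_mem hne
  refine ⟨sInf T, hmem.1, hmem.2, ?_, ?_⟩
  · intro j hj hxj
    have hle : sInf T ≤ j := csInf_le (OrderBot.bddBelow T) ⟨lt_trans hj hmem.1, hxj⟩
    exact absurd hj (not_lt.2 hle)
  · intro α h1 h2
    exact csInf_le (OrderBot.bddBelow T) ⟨h1, h2⟩

/-! ### The key extraction lemma -/

/-- If the diagonal sets of a disjoint family all lie in `H`, then a dominating
family of size `cof(H)` exists. -/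
lemma key (hreg : κ.IsRegular) (H : IdealP κ lam)
    (F : Ordinal.{0} → Set (Set Ordinal.{0}))
    (hdisj : ∀ x i j, x ∈ F i → x ∈ F j → i = j)
    (A₁ : Set (Set Ordinal.{0})) (hA₁s : A₁ ⊆ smallSet κ lam)
    (hunb : ∀ D ∈ H.mem, ∀ β < κ.ord,
      ∃ x i, β ≤ i ∧ i < κ.ord ∧ x ∈ F i ∧ x ∈ A₁ ∧ x ∉ D)
    (hall : ∀ g : Ordinal.{0} → Set Ordinal.{0}, (∀ α < κ.ord, g α ∈ smallSet κ lam) →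
      {x | x ∈ A₁ ∧ ∀ i < κ.ord, x ∈ F i → ¬ g i ⊆ x} ∈ H.mem) :
    domP κ lam ≤ H.cof := by
  -- a cofinal witness for cof(H)
  obtain ⟨X, ⟨hXsub, hXcof⟩, hXlift⟩ :
      ∃ X : Set (Set (Set Ordinal.{0})),
        (X ⊆ H.mem ∧ ∀ A, A ∈ H.mem ↔ ∃ B ∈ X, A ⊆ B) ∧
        Cardinal.lift.{1} H.cof = #X := by
    apply leastCard_spec
    obtain ⟨c, hc⟩ := exists_lift_eq_mk (S := H.mem) (fun A hA => H.subset_pk A hA)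
    exact ⟨c, H.mem, ⟨subset_rfl, fun A =>
      ⟨fun hA => ⟨A, hA, subset_rfl⟩, fun ⟨B, hB, hAB⟩ => H.subset_mem B hB A hAB⟩⟩, hc⟩
  set S : Set (Set Ordinal.{0}) → Ordinal.{0} → Set (Set Ordinal.{0}) :=
    fun D β => {x | ∃ i, β ≤ i ∧ i < κ.ord ∧ x ∈ F i ∧ x ∈ A₁ ∧ x ∉ D} with hS
  set hFun : Set (Set Ordinal.{0}) → Ordinal.{0} → Set Ordinal.{0} :=
    fun D β => if h : (S D β).Nonempty then h.some else ∅ with hhFun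
  have hSne : ∀ D ∈ X, ∀ β < κ.ord, (S D β).Nonempty := by
    intro D hD β hβ
    obtain ⟨x, i, h1, h2, h3, h4, h5⟩ := hunb D (hXsub hD) β hβ
    exact ⟨x, i, h1, h2, h3, h4, h5⟩
  have hFunmem : ∀ D ∈ X, ∀ β < κ.ord, hFun D β ∈ smallSet κ lam := by
    intro D hD β hβ
    have hne := hSne D hD β hβ
    simp only [hhFun, dif_pos hne]
    obtain ⟨i, _, _, _, h4, _⟩ := hne.some_mem
    exact hA₁s h4
  -- the dominating family
  set Fam : Set (Ordinal.{0} → Set Ordinal.{0}) := hFun '' X with hFam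
  have hdom : ∀ g : Ordinal.{0} → Set Ordinal.{0}, (∀ α < κ.ord, g α ∈ smallSet κ lam) →
      ∃ h ∈ Fam, ∀ α < κ.ord, g α ⊆ h α := by
    intro g hg
    set g' : Ordinal.{0} → Set Ordinal.{0} :=
      fun i => {o | ∃ β, β ≤ i ∧ β < κ.ord ∧ o ∈ g β} with hg'def
    have hg' : ∀ i < κ.ord, g' i ∈ smallSet κ lam := by
      intro i hi
      exact unionSmall hreg hi hg
    have hC := hall g' hg'
    obtain ⟨D, hDX, hCD⟩ := (hXcof _).mp hC
    refine ⟨hFun D, Set.mem_image_of_mem _ hDX, ?_⟩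
    intro β hβ
    have hne := hSne D hDX β hβ
    obtain ⟨i, hβi, hiκ, hxF, hxA, hxD⟩ := hne.some_mem
    have hxC : hne.some ∉ {x | x ∈ A₁ ∧ ∀ i < κ.ord, x ∈ F i → ¬ g' i ⊆ x} :=
      fun h => hxD (hCD h)
    have hex : ∃ i₀, i₀ < κ.ord ∧ hne.some ∈ F i₀ ∧ g' i₀ ⊆ hne.some := by
      by_contra hno
      push_neg at hno
      exact hxC ⟨hxA, fun i₀ h1 h2 => hno i₀ h1 h2⟩
    obtain ⟨i₀, hi₀κ, hi₀F, hi₀sub⟩ := hex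
    have : i₀ = i := hdisj hne.some i₀ i hi₀F hxF
    subst this
    have hgsub : g β ⊆ g' i₀ := by
      intro o ho
      exact ⟨β, hβi, hβ, ho⟩
    simp only [hhFun, dif_pos hne]
    exact hgsub.trans hi₀sub
  -- conclude
  have hle : #Fam ≤ Cardinal.lift.{1} H.cof := by
    rw [hXlift]
    exact Cardinal.mk_image_le
  obtain ⟨c, hc⟩ := Set.mem_range.mp (Cardinal.mem_range_lift_of_le hle)
  have hcle : c ≤ H.cof := by
    rw [← Cardinal.lift_le.{1}, hc]
    exact hle
  refine le_trans ?_ hcle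
  apply leastCard_le _ hc
  constructor
  · rintro h ⟨D, hDX, rfl⟩ α hα
    exact hFunmem D hDX α hα
  · intro g hg
    obtain ⟨h, hh, hdm⟩ := hdom g hg
    exact ⟨h, hh, hdm⟩

/-! ### Weak π-point -/

lemma weak_pi (hreg : κ.IsRegular) (H : IdealP κ lam) (hcof : H.cof < domP κ lam) :
    WeakPiPoint H := by
  intro f hf A hA
  obtain ⟨hAs, hAm⟩ := hA
  by_cases h₀ : {x | x ∈ A ∧ ∀ α < κ.ord, x ∉ f α} ∈ H.mem
  swap
  · refine ⟨{x | x ∈ A ∧ ∀ α < κ.ord, x ∉ f α}, ⟨fun x hx => hAs hx.1, h₀⟩,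
      fun x hx => hx.1, ?_⟩
    intro α hα
    refine ⟨fun x hx => hAs hx.1.1, ∅, empty_mem_smallSet hreg, ?_⟩
    intro b hb
    exact absurd hb.2 (hb.1.2 α hα)
  · set F : Ordinal.{0} → Set (Set Ordinal.{0}) :=
      fun i => {x | x ∈ f i ∧ ∀ j < i, x ∉ f j} with hF
    set A₁ : Set (Set Ordinal.{0}) := {x | x ∈ A ∧ ∃ α, α < κ.ord ∧ x ∈ f α} with hA₁def
    have hdisj : ∀ (x : Set Ordinal.{0}) i j, x ∈ F i → x ∈ F j → i = j := by
      intro x i j hi hj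
      rcases lt_trichotomy i j with h | h | h
      · exact absurd hi.1 (hj.2 i h)
      · exact h
      · exact absurd hj.1 (hi.2 j h)
    have hA₁m : A₁ ∉ H.mem := by
      intro hm
      apply hAm
      apply H.subset_mem _ (H.union_mem' hreg h₀ hm)
      intro x hx
      by_cases hx' : ∃ α, α < κ.ord ∧ x ∈ f α
      · exact Or.inr ⟨hx, hx'⟩
      · push_neg at hx'
        exact Or.inl ⟨hx, fun α hα => hx' α hα⟩
    by_cases hg : ∃ g : Ordinal.{0} → Set Ordinal.{0}, (∀ α < κ.ord, g α ∈ smallSet κ lam) ∧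
        {x | x ∈ A₁ ∧ ∀ i < κ.ord, x ∈ F i → ¬ g i ⊆ x} ∉ H.mem
    · obtain ⟨g, hgs, hB⟩ := hg
      set B := {x | x ∈ A₁ ∧ ∀ i < κ.ord, x ∈ F i → ¬ g i ⊆ x} with hBdef
      have hBA : B ⊆ A := fun x hx => hx.1.1
      refine ⟨B, ⟨fun x hx => hAs (hBA hx), hB⟩, hBA, ?_⟩
      intro α hα
      refine ⟨fun x hx => hAs (hBA hx.1), {o | ∃ β, β ≤ α ∧ β < κ.ord ∧ o ∈ g β},
        unionSmall hreg hα hgs, ?_⟩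
      intro b hb
      obtain ⟨hbB, hbf⟩ := hb
      obtain ⟨i, hiκ, hbfi, hleast, hmin⟩ := exists_least_index (f := f) ⟨α, hα, hbf⟩
      have hbFi : b ∈ F i := ⟨hbfi, hleast⟩
      have hng : ¬ g i ⊆ b := hbB.2 i hiκ hbFi
      intro hab
      apply hng
      intro o ho
      exact hab ⟨i, hmin α hα hbf, hiκ, ho⟩
    · push_neg at hg
      exfalso
      have hunb : ∀ D ∈ H.mem, ∀ β < κ.ord,
          ∃ x i, β ≤ i ∧ i < κ.ord ∧ x ∈ F i ∧ x ∈ A₁ ∧ x ∉ D := by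
        intro D hD β hβ
        by_contra hno
        push_neg at hno
        apply hA₁m
        have hbi : {x | ∃ i < β, x ∈ F i} ∈ H.mem := by
          apply H.biUnion_mem hreg hβ
          intro i hi
          exact H.subset_mem (f i) (hf i (lt_trans hi hβ)) (F i) (fun x hx => hx.1)
        apply H.subset_mem _ (H.union_mem' hreg hD hbi)
        intro x hx
        obtain ⟨hxA, α, hακ, hxf⟩ := hx
        obtain ⟨i, hiκ, hxfi, hleast, _⟩ := exists_least_index (f := f) ⟨α, hακ, hxf⟩
        have hxF : x ∈ F i := ⟨hxfi, hleast⟩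
        by_cases hβi : β ≤ i
        · exact Or.inl (hno x i hβi hiκ hxF ⟨hxA, α, hακ, hxf⟩)
        · exact Or.inr ⟨i, not_le.mp hβi, hxF⟩
      have hkey := key hreg H F hdisj A₁ (fun x hx => hAs hx.1) hunb hg
      exact absurd hkey (not_le.2 hcof)

/-! ### No mad family of size κ -/

lemma mad_card_ne (hreg : κ.IsRegular) (H : IdealP κ lam) (hcof : H.cof < domP κ lam)
    (Q : Set (Set (Set Ordinal.{0}))) (hQ : IsMad H Q) : #Q ≠ Cardinal.lift.{1} κ := by
  intro heq
  obtain ⟨hQp, hQc, hQad, hQmax⟩ := hQ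
  have hcard : #(Set.Iio κ.ord) = #Q := by
    rw [Ordinal.mk_Iio_ordinal, Cardinal.card_ord, heq]
  obtain ⟨E⟩ := Cardinal.eq.mp hcard
  set e : Ordinal.{0} → Set (Set Ordinal.{0}) :=
    fun i => if h : i < κ.ord then (E ⟨i, h⟩ : Set (Set Ordinal.{0})) else ∅ with he
  have he_mem : ∀ i, i < κ.ord → e i ∈ Q := by
    intro i hi
    simp only [he, dif_pos hi]
    exact (E ⟨i, hi⟩).2
  have he_surj : ∀ A ∈ Q, ∃ i, i < κ.ord ∧ e i = A := by
    intro A hA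
    refine ⟨(E.symm ⟨A, hA⟩ : Set.Iio κ.ord), (E.symm ⟨A, hA⟩).2, ?_⟩
    have h1 : e ((E.symm ⟨A, hA⟩ : Set.Iio κ.ord) : Ordinal.{0}) =
        (E (E.symm ⟨A, hA⟩) : Set (Set Ordinal.{0})) := by
      exact dif_pos (E.symm ⟨A, hA⟩).2
    rw [h1, E.apply_symm_apply]
  have he_inj : ∀ i, i < κ.ord → ∀ j, j < κ.ord → e i = e j → i = j := by
    intro i hi j hj hij
    simp only [he, dif_pos hi, dif_pos hj] at hij
    have h2 := E.injective (Subtype.ext hij)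
    exact congrArg Subtype.val h2
  set U : Set (Set Ordinal.{0}) := {x | ∃ i, i < κ.ord ∧ x ∈ e i} with hUdef
  have hUs : U ⊆ smallSet κ lam := by
    rintro x ⟨i, hi, hx⟩
    exact (hQp (he_mem i hi)).1 hx
  have hUm : U ∉ H.mem := by
    intro hUmem
    have hCp : smallSet κ lam \ U ∈ H.plus := by
      refine ⟨Set.diff_subset, ?_⟩
      intro hmem
      apply H.ne_top
      apply H.subset_mem _ (H.union_mem' hreg hUmem hmem)
      intro x hx
      by_cases h : x ∈ U
      · exact Or.inl h
      · exact Or.inr ⟨hx, h⟩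
    obtain ⟨A, hAQ, hACp⟩ := hQmax _ hCp
    apply hACp.2
    have hempty : A ∩ (smallSet κ lam \ U) = ∅ := by
      ext x
      simp only [Set.mem_inter_iff, Set.mem_diff, Set.mem_empty_iff_false, iff_false]
      rintro ⟨hxA, _, hxU⟩
      obtain ⟨i, hi, hei⟩ := he_surj A hAQ
      exact hxU ⟨i, hi, hei ▸ hxA⟩
    rw [hempty]
    exact H.fine (empty_mem_Ikl hreg)
  set F : Ordinal.{0} → Set (Set Ordinal.{0}) :=
    fun i => {x | x ∈ e i ∧ ∀ j < i, x ∉ e j} with hF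
  have hdisj : ∀ (x : Set Ordinal.{0}) i j, x ∈ F i → x ∈ F j → i = j := by
    intro x i j hi hj
    rcases lt_trichotomy i j with h | h | h
    · exact absurd hi.1 (hj.2 i h)
    · exact h
    · exact absurd hj.1 (hi.2 j h)
  by_cases hg : ∃ g : Ordinal.{0} → Set Ordinal.{0}, (∀ α < κ.ord, g α ∈ smallSet κ lam) ∧
      {x | x ∈ U ∧ ∀ i < κ.ord, x ∈ F i → ¬ g i ⊆ x} ∉ H.mem
  · obtain ⟨g, hgs, hC⟩ := hg
    set C := {x | x ∈ U ∧ ∀ i < κ.ord, x ∈ F i → ¬ g i ⊆ x} with hCdef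
    have hCp : C ∈ H.plus := ⟨fun x hx => hUs hx.1, hC⟩
    obtain ⟨A, hAQ, hACp⟩ := hQmax _ hCp
    obtain ⟨i, hiκ, hei⟩ := he_surj A hAQ
    apply hACp.2
    apply H.fine
    refine ⟨fun x hx => hUs hx.2.1, {o | ∃ β, β ≤ i ∧ β < κ.ord ∧ o ∈ g β},
      unionSmall hreg hiκ hgs, ?_⟩
    intro b hb
    have hbe : b ∈ e i := hei ▸ hb.1
    have hbC : b ∈ C := hb.2
    obtain ⟨j, hjκ, hbej, hleast, hmin⟩ := exists_least_index (f := e) ⟨i, hiκ, hbe⟩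
    have hbF : b ∈ F j := ⟨hbej, hleast⟩
    have hng : ¬ g j ⊆ b := hbC.2 j hjκ hbF
    intro hab
    apply hng
    intro o ho
    exact hab ⟨j, hmin i hiκ hbe, hjκ, ho⟩
  · push_neg at hg
    have hunb : ∀ D ∈ H.mem, ∀ β < κ.ord,
        ∃ x i, β ≤ i ∧ i < κ.ord ∧ x ∈ F i ∧ x ∈ U ∧ x ∉ D := by
      intro D hD β hβ
      by_contra hno
      push_neg at hno
      have heβQ : e β ∈ Q := he_mem β hβ
      apply (hQp heβQ).2
      have hbi : {x | ∃ i < β, x ∈ e β ∩ e i} ∈ H.mem := by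
        apply H.biUnion_mem hreg hβ
        intro i hi
        apply hQad (e β) heβQ (e i) (he_mem i (lt_trans hi hβ))
        intro h
        exact absurd (he_inj β hβ i (lt_trans hi hβ) h).symm (ne_of_lt hi)
      apply H.subset_mem _ (H.union_mem' hreg hD hbi)
      intro x hx
      have hxU : x ∈ U := ⟨β, hβ, hx⟩
      obtain ⟨j, hjκ, hxej, hleast, _⟩ := exists_least_index (f := e) ⟨β, hβ, hx⟩
      have hxF : x ∈ F j := ⟨hxej, hleast⟩
      by_cases hβj : β ≤ j
      · exact Or.inl (hno x j hβj hjκ hxF hxU)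
      · exact Or.inr ⟨j, not_le.mp hβj, hx, hxej⟩
    have hkey := key hreg H F hdisj U hUs hunb hg
    exact absurd hkey (not_le.2 hcof)

/-! ### a_H > κ -/

lemma kappa_lt_aNum (hreg : κ.IsRegular) (hlt : κ < lam) (H : IdealP κ lam)
    (hcof : H.cof < domP κ lam) : κ < aNum H := by
  by_cases hEx : ∃ Q, IsMad H Q
  · unfold aNum
    rw [if_pos hEx]
    have hne : {c : Cardinal.{0} | ∃ Q, IsMad H Q ∧ Cardinal.lift.{1} c = #Q}.Nonempty := by
      obtain ⟨Q₀, hQ₀⟩ := hEx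
      obtain ⟨c, hc⟩ := exists_lift_eq_mk (S := Q₀) (fun A hA => (hQ₀.1 hA).1)
      exact ⟨c, Q₀, hQ₀, hc⟩
    have hlow : ∀ c ∈ {c : Cardinal.{0} | ∃ Q, IsMad H Q ∧ Cardinal.lift.{1} c = #Q},
        Order.succ κ ≤ c := by
      rintro c ⟨Q, hQ, hlift⟩
      apply Order.succ_le_of_lt
      have h1 : Cardinal.lift.{1} κ ≤ #Q := hQ.2.1
      have h2 : #Q ≠ Cardinal.lift.{1} κ := mad_card_ne hreg H hcof Q hQ
      have h3 : Cardinal.lift.{1} κ < #Q := lt_of_le_of_ne h1 (Ne.symm h2)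
      rw [← hlift] at h3
      exact Cardinal.lift_lt.mp h3
    have hle := le_csInf hne hlow
    exact lt_of_lt_of_le (Order.lt_succ κ) hle
  · unfold aNum
    rw [if_neg hEx]
    have hdc : Cardinal.lift.{1} (downCard #(smallSet κ lam)) = #(smallSet κ lam) := by
      have hne : {d : Cardinal.{0} | Cardinal.lift.{1} d = #(smallSet κ lam)}.Nonempty :=
        Set.mem_range.mp (Cardinal.mem_range_lift_of_le mk_smallSet_le)
      exact csInf_mem hne
    have hge : lam ≤ downCard #(smallSet κ lam) := by
      rw [← Cardinal.lift_le.{1}, hdc]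
      exact lift_lam_le_mk_smallSet hreg
    calc κ < lam := hlt
    _ ≤ downCard #(smallSet κ lam) := hge
    _ < 2 ^ downCard #(smallSet κ lam) := Cardinal.cantor _
    _ ≤ 2 ^ Order.succ (downCard #(smallSet κ lam)) :=
        Cardinal.power_le_power_left two_ne_zero (Order.le_succ _)

end Aux

-- AUXEND

/-- If `H` is an ideal on `P_κ(λ)` with `cof(H) < d^κ_{κ,λ}`, then
`a_H > κ` and `H` is a weak `π`-point. -/
theorem aNum_gt_and_weakPiPoint (κ lam : Cardinal.{0}) (hreg : κ.IsRegular) (huc : ℵ₀ < κ)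
    (hlt : κ < lam) (H : IdealP κ lam) (hcof : H.cof < domP κ lam) :
    κ < aNum H ∧ WeakPiPoint H :=
  ⟨kappa_lt_aNum hreg hlt H hcof, weak_pi hreg H hcof⟩

end PaperFormal
end
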